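/- arXiv:1907.13325 — 5 statements merged into one kernel-verified Lean document; each statement's English description precedes it below -/
import Mathlib

section
/- Let {a_n} and {b_n} be sequences of nonnegative real numbers and α > β > 0 constants such that a_n ≍ e^{-αn} and b_n ≍ e^{-βn} (i.e., there exist positive constants c₁, c₂ with c₁ e^{-αn} ≤ a_n ≤ c₂ e^{-αn} and similarly for b_n). Then there exist positive constants C₁, C₂ (independent of η) such that for all sufficiently small η > 0: C₁ η^{β/α - 1} ≤ Σ_{n=1}^∞ b_n/(a_n + η) ≤ C₂ η^{β/α - 1}. -/
/-- power-law asymptotics of `∑_{n=1}^∞ b_n / (a_n + η)` when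
`a_n ≍ e^{-αn}` and `b_n ≍ e^{-βn}` with `0 < β < α`. -/
theorem stmt0 (a b : ℕ → ℝ) (α β : ℝ) (hβ : 0 < β) (hβα : β < α)
    (ha0 : ∀ n : ℕ, 0 ≤ a n) (hb0 : ∀ n : ℕ, 0 ≤ b n)
    (c₁ c₂ d₁ d₂ : ℝ) (hc₁ : 0 < c₁) (hc₂ : 0 < c₂) (hd₁ : 0 < d₁) (hd₂ : 0 < d₂)
    (ha : ∀ n : ℕ, 1 ≤ n → c₁ * Real.exp (-α * n) ≤ a n ∧ a n ≤ c₂ * Real.exp (-α * n))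
    (hb : ∀ n : ℕ, 1 ≤ n → d₁ * Real.exp (-β * n) ≤ b n ∧ b n ≤ d₂ * Real.exp (-β * n)) :
    ∃ C₁ C₂ η₀ : ℝ, 0 < C₁ ∧ 0 < C₂ ∧ 0 < η₀ ∧ ∀ η : ℝ, 0 < η → η < η₀ →
      C₁ * η ^ (β / α - 1) ≤ (∑' n : ℕ, b (n + 1) / (a (n + 1) + η)) ∧
      (∑' n : ℕ, b (n + 1) / (a (n + 1) + η)) ≤ C₂ * η ^ (β / α - 1) := by
  have hα : 0 < α := hβ.trans hβα
  have hαβ : 0 < α - β := by linarith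
  obtain ⟨r, hr⟩ : ∃ r : ℝ, r = Real.exp (α - β) := ⟨_, rfl⟩
  obtain ⟨s, hs⟩ : ∃ s : ℝ, s = Real.exp (-β) := ⟨_, rfl⟩
  have hr1 : (1:ℝ) < r := hr ▸ Real.one_lt_exp_iff.2 hαβ
  have hs1 : s < 1 := hs ▸ Real.exp_lt_one_iff.2 (by linarith)
  have hs0 : 0 < s := hs ▸ Real.exp_pos _
  refine ⟨d₁ * s / (c₂ + 1),
    d₂ / c₁ * r * r / (r - 1) + d₂ / (1 - s), Real.exp (-α),
    by positivity, ?_, Real.exp_pos _, ?_⟩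
  · have h1 : 0 < r - 1 := by linarith
    have h2 : 0 < 1 - s := by linarith
    positivity
  intro η hη hη'
  obtain ⟨L, hηL, hLη, hLneg⟩ : ∃ L : ℝ, η = Real.exp L ∧ Real.log η = L ∧ L < -α :=
    ⟨Real.log η, (Real.exp_log hη).symm, rfl, (Real.log_lt_iff_lt_exp hη).2 hη'⟩
  obtain ⟨N, hN1, hT1, hT2⟩ : ∃ N : ℕ, 1 ≤ N ∧ -L ≤ α * N ∧ α * N ≤ -L + α := by
    refine ⟨⌈(-L) / α⌉₊, Nat.one_le_ceil_iff.2 (div_pos (by linarith) hα), ?_, ?_⟩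
    · have h := Nat.le_ceil ((-L)/α)
      rw [div_le_iff₀ hα] at h
      linarith
    · have h := Nat.ceil_lt_add_one (le_of_lt (div_pos (by linarith : (0:ℝ) < -L) hα))
      have h2 : ((⌈(-L)/α⌉₊ : ℝ) - 1) * α < -L := (lt_div_iff₀ hα).1 (by linarith)
      nlinarith
  have hv : α * (β / α) = β := by field_simp
  have hNv : (N:ℝ) * β = (N:ℝ) * (α * (β / α)) := by rw [hv]
  have hv0 : (0:ℝ) ≤ β / α := (div_pos hβ hα).le
  have hv1 : β / α ≤ 1 := by rw [div_le_one hα]; linarith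
  have hrpow : η ^ (β / α - 1) = Real.exp ((β / α - 1) * L) := by
    rw [Real.rpow_def_of_pos hη, hLη, mul_comm]
  rw [hrpow]
  -- pointwise bounds
  have hapos : ∀ n : ℕ, 0 < a (n+1) + η := fun n => by have := ha0 (n+1); linarith
  have fnonneg : ∀ n : ℕ, 0 ≤ b (n+1) / (a (n+1) + η) := fun n =>
    div_nonneg (hb0 _) (hapos n).le
  have hspow : ∀ m : ℕ, Real.exp (-β * (m:ℝ)) = s ^ m := fun m => by
    rw [hs, ← Real.exp_nat_mul]; ring_nf
  have fle : ∀ n : ℕ, b (n+1) / (a (n+1) + η) ≤ (d₂ / η) * s ^ (n+1) := by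
    intro n
    have hbn := (hb (n+1) (by omega)).2
    have h1 : b (n+1) / (a (n+1) + η) ≤ (d₂ * Real.exp (-β * (((n+1):ℕ):ℝ))) / η := by
      apply div_le_div₀ (by positivity) hbn hη (by have := ha0 (n+1); linarith)
    calc b (n+1) / (a (n+1) + η) ≤ (d₂ * Real.exp (-β * (((n+1):ℕ):ℝ))) / η := h1
      _ = (d₂ / η) * s ^ (n+1) := by rw [hspow]; ring
  have hg : Summable (fun n : ℕ => (d₂ / η) * s ^ (n+1)) := by
    have : Summable (fun n : ℕ => (d₂ / η * s) * s ^ n) :=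
      (summable_geometric_of_lt_one hs0.le hs1).mul_left _
    simpa [pow_succ, mul_comm, mul_assoc, mul_left_comm] using this
  have hsum : Summable (fun n : ℕ => b (n+1) / (a (n+1) + η)) :=
    Summable.of_nonneg_of_le fnonneg fle hg
  constructor
  · -- lower bound via the single term n = N - 1
    have hlow := Summable.le_tsum hsum (N - 1) (fun j _ => fnonneg j)
    have hNsub : (N - 1) + 1 = N := by omega
    rw [hNsub] at hlow
    have hbN := (hb N hN1).1
    have haN := (ha N hN1).2
    have hexpa : Real.exp (-α * N) ≤ η := by
      rw [hηL]; exact Real.exp_le_exp.2 (by linarith)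
    have hden : a N + η ≤ (c₂ + 1) * η := by nlinarith
    have step : d₁ * Real.exp (-β * N) / ((c₂+1) * η) ≤ b N / (a N + η) :=
      div_le_div₀ (hb0 N) hbN (by have := ha0 N; linarith) hden
    have hfin : d₁ * s / (c₂ + 1) * Real.exp ((β / α - 1) * L)
        ≤ d₁ * Real.exp (-β * N) / ((c₂+1) * η) := by
      have e1 : d₁ * s / (c₂ + 1) * Real.exp ((β / α - 1) * L)
          = d₁ / (c₂ + 1) * Real.exp (-β + (β / α - 1) * L) := by
        rw [Real.exp_add, hs]; ring
      have e2 : d₁ * Real.exp (-β * N) / ((c₂+1) * η)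
          = d₁ / (c₂ + 1) * Real.exp (-β * N - L) := by
        rw [hηL, Real.exp_sub]
        field_simp
        try ring
      rw [e1, e2]
      apply mul_le_mul_of_nonneg_left _ (by positivity)
      apply Real.exp_le_exp.2
      have q1 : 0 ≤ (β / α) * (-L + α - α * N) := mul_nonneg hv0 (by linarith)
      linarith [q1, hNv, hv]
    linarith
  · -- upper bound : split the sum at N
    rw [← hsum.sum_add_tsum_nat_add N]
    have hE := Real.exp_pos ((β / α - 1) * L)
    have headle : ∑ n ∈ Finset.range N, b (n+1) / (a (n+1) + η)
        ≤ d₂ / c₁ * r * ((r ^ N - 1) / (r - 1)) := by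
      have hterm : ∀ n ∈ Finset.range N, b (n+1) / (a (n+1) + η) ≤ d₂ / c₁ * r * r ^ n := by
        intro n _
        have hbn := (hb (n+1) (by omega)).2
        have han := (ha (n+1) (by omega)).1
        have h1 : b (n+1) / (a (n+1) + η)
            ≤ (d₂ * Real.exp (-β * (((n+1):ℕ):ℝ))) / (c₁ * Real.exp (-α * (((n+1):ℕ):ℝ))) :=
          div_le_div₀ (by positivity) hbn (by positivity) (by linarith)
        refine h1.trans_eq ?_
        rw [mul_div_mul_comm, ← Real.exp_sub, hr]
        have h2 : -β * (((n+1):ℕ):ℝ) - -α * (((n+1):ℕ):ℝ) = (α - β) + (n:ℝ) * (α - β) := by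
          push_cast; ring
        rw [h2, Real.exp_add, Real.exp_nat_mul]
        ring
      calc ∑ n ∈ Finset.range N, b (n+1) / (a (n+1) + η)
          ≤ ∑ n ∈ Finset.range N, d₂ / c₁ * r * r ^ n := Finset.sum_le_sum hterm
        _ = d₂ / c₁ * r * ∑ n ∈ Finset.range N, r ^ n := by rw [Finset.mul_sum]
        _ = d₂ / c₁ * r * ((r ^ N - 1) / (r - 1)) := by rw [geom_sum_eq (ne_of_gt hr1)]
    have hrN : r ^ N ≤ r * Real.exp ((β / α - 1) * L) := by
      rw [hr, ← Real.exp_nat_mul, ← Real.exp_add]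
      apply Real.exp_le_exp.2
      have p1 : 0 ≤ (1 - β / α) * (-L + α - α * N) :=
        mul_nonneg (by linarith) (by linarith)
      linarith [p1, hNv, hv]
    have head2 : d₂ / c₁ * r * ((r ^ N - 1) / (r - 1))
        ≤ d₂ / c₁ * r * r / (r - 1) * Real.exp ((β / α - 1) * L) := by
      have h1 : 0 < r - 1 := by linarith
      calc d₂ / c₁ * r * ((r ^ N - 1) / (r - 1))
          ≤ d₂ / c₁ * r * ((r * Real.exp ((β / α - 1) * L)) / (r - 1)) := by
            have hr0 : (0:ℝ) ≤ r := by linarith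
            apply mul_le_mul_of_nonneg_left _ (mul_nonneg (div_pos hd₂ hc₁).le hr0)
            exact div_le_div_of_nonneg_right (by linarith) h1.le
        _ = d₂ / c₁ * r * r / (r - 1) * Real.exp ((β / α - 1) * L) := by ring
    have tailbound : (∑' n : ℕ, b (n+N+1) / (a (n+N+1) + η))
        ≤ d₂ / (1 - s) * Real.exp ((β / α - 1) * L) := by
      have hgs : Summable (fun n : ℕ => (d₂ / η * Real.exp (-β * (((N+1):ℕ):ℝ))) * s ^ n) :=
        (summable_geometric_of_lt_one hs0.le hs1).mul_left _
      have hle : ∀ n : ℕ, b (n+N+1) / (a (n+N+1) + η)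
          ≤ (d₂ / η * Real.exp (-β * (((N+1):ℕ):ℝ))) * s ^ n := by
        intro n
        have hbn := (hb (n+N+1) (by omega)).2
        have h1 : b (n+N+1) / (a (n+N+1) + η)
            ≤ (d₂ * Real.exp (-β * (((n+N+1):ℕ):ℝ))) / η :=
          div_le_div₀ (by positivity) hbn hη (by have := ha0 (n+N+1); linarith)
        refine h1.trans_eq ?_
        have h2 : -β * (((n+N+1):ℕ):ℝ) = -β * (((N+1):ℕ):ℝ) + -β * ((n:ℕ):ℝ) := by
          push_cast; ring
        simp only [h2, Real.exp_add, hspow]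
        ring
      have hsum' : Summable (fun n : ℕ => b (n+N+1) / (a (n+N+1) + η)) := by
        have h := (summable_nat_add_iff (f := fun n : ℕ => b (n+1) / (a (n+1) + η)) N).2 hsum
        simpa [add_assoc, add_comm, add_left_comm] using h
      calc (∑' n : ℕ, b (n+N+1) / (a (n+N+1) + η))
          ≤ ∑' n : ℕ, (d₂ / η * Real.exp (-β * (((N+1):ℕ):ℝ))) * s ^ n :=
            Summable.tsum_le_tsum hle hsum' hgs
        _ = (d₂ / η * Real.exp (-β * (((N+1):ℕ):ℝ))) * (1 - s)⁻¹ := by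
            rw [tsum_mul_left, tsum_geometric_of_lt_one hs0.le hs1]
        _ ≤ d₂ / (1 - s) * Real.exp ((β / α - 1) * L) := by
            have h2 : 0 < 1 - s := by linarith
            have key : Real.exp (-β * (((N+1):ℕ):ℝ)) / η ≤ Real.exp ((β / α - 1) * L) := by
              rw [hηL, ← Real.exp_sub]
              apply Real.exp_le_exp.2
              push_cast
              have q2 : 0 ≤ (β / α) * (α * N + L) := mul_nonneg hv0 (by linarith)
              linarith [q2, hNv, hv, hβ.le]
            calc d₂ / η * Real.exp (-β * (((N+1):ℕ):ℝ)) * (1 - s)⁻¹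
                = d₂ / (1 - s) * (Real.exp (-β * (((N+1):ℕ):ℝ)) / η) := by
                  field_simp
              _ ≤ d₂ / (1 - s) * Real.exp ((β / α - 1) * L) :=
                  mul_le_mul_of_nonneg_left key (by positivity)
    calc ∑ n ∈ Finset.range N, b (n+1) / (a (n+1) + η)
          + ∑' n : ℕ, b (n+N+1) / (a (n+N+1) + η)
        ≤ d₂ / c₁ * r * r / (r - 1) * Real.exp ((β / α - 1) * L)
          + d₂ / (1 - s) * Real.exp ((β / α - 1) * L) :=
          add_le_add (headle.trans head2) tailbound
      _ = (d₂ / c₁ * r * r / (r - 1) + d₂ / (1 - s)) * Real.exp ((β / α - 1) * L) := by ring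
end

section
/- Under the same hypotheses (a_n ≍ e^{-αn}, b_n ≍ e^{-βn}, 0 < β < α), there exist positive constants C₁, C₂ independent of η such that for all sufficiently small η > 0: C₁ η^{β/α - 2} ≤ Σ_{n=1}^∞ b_n/(a_n + η)² ≤ C₂ η^{β/α - 2}. -/
set_option maxHeartbeats 1000000

/-- power-law asymptotics of `∑_{n=1}^∞ b_n / (a_n + η)²` when
`a_n ≍ e^{-αn}` and `b_n ≍ e^{-βn}` with `0 < β < α`. -/
theorem stmt1 (a b : ℕ → ℝ) (α β : ℝ) (hβ : 0 < β) (hβα : β < α)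
    (ha0 : ∀ n : ℕ, 0 ≤ a n) (hb0 : ∀ n : ℕ, 0 ≤ b n)
    (c₁ c₂ d₁ d₂ : ℝ) (hc₁ : 0 < c₁) (hc₂ : 0 < c₂) (hd₁ : 0 < d₁) (hd₂ : 0 < d₂)
    (ha : ∀ n : ℕ, 1 ≤ n → c₁ * Real.exp (-α * n) ≤ a n ∧ a n ≤ c₂ * Real.exp (-α * n))
    (hb : ∀ n : ℕ, 1 ≤ n → d₁ * Real.exp (-β * n) ≤ b n ∧ b n ≤ d₂ * Real.exp (-β * n)) :
    ∃ C₁ C₂ η₀ : ℝ, 0 < C₁ ∧ 0 < C₂ ∧ 0 < η₀ ∧ ∀ η : ℝ, 0 < η → η < η₀ →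
      C₁ * η ^ (β / α - 2) ≤ (∑' n : ℕ, b (n + 1) / (a (n + 1) + η) ^ 2) ∧
      (∑' n : ℕ, b (n + 1) / (a (n + 1) + η) ^ 2) ≤ C₂ * η ^ (β / α - 2) := by
  have hα : 0 < α := hβ.trans hβα
  set r : ℝ := Real.exp (2*α - β) with hr
  have hr1 : 1 < r := by
    rw [hr, show (1:ℝ) = Real.exp 0 by simp]
    exact Real.exp_lt_exp.2 (by linarith)
  have heβ : Real.exp (-β) < 1 := by
    rw [show (1:ℝ) = Real.exp 0 by simp]
    exact Real.exp_lt_exp.2 (by linarith)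
  have hr0 : (0:ℝ) < r - 1 := by linarith
  have heβ0 : (0:ℝ) < 1 - Real.exp (-β) := by linarith
  have hrpow : ∀ m : ℕ, r ^ m = Real.exp ((2*α-β) * m) := fun m => by
    rw [mul_comm (2*α-β) (m:ℝ), Real.exp_nat_mul, hr]
  have heβpow : ∀ m : ℕ, Real.exp (-β) ^ m = Real.exp (-β * m) := fun m => by
    rw [mul_comm, Real.exp_nat_mul]
  refine ⟨d₁ * Real.exp (-β) / (c₂+1)^2,
    d₂/c₁^2 * r^2/(r-1) + d₂ * Real.exp (-β) / (1 - Real.exp (-β)),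
    Real.exp (-α), by positivity,
    add_pos (div_pos (by positivity) hr0) (div_pos (by positivity) heβ0),
    Real.exp_pos _, ?_⟩
  intro η hη hηα
  have hηγ : η ^ (β/α - 2) = η ^ (β/α) / η ^ 2 := by
    rw [Real.rpow_sub hη, Real.rpow_two]
  -- summability
  have hf0 : ∀ n : ℕ, 0 ≤ b (n+1) / (a (n+1) + η)^2 := fun n =>
    div_nonneg (hb0 _) (by positivity)
  have hfb : ∀ n : ℕ, b (n+1) / (a (n+1) + η)^2
      ≤ (d₂ * Real.exp (-β) / η^2) * Real.exp (-β) ^ n := by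
    intro n
    have h1 : b (n+1) ≤ d₂ * Real.exp (-β * ((n:ℝ)+1)) := by
      have := (hb (n+1) (by omega)).2
      push_cast at this; exact this
    have h2 : η^2 ≤ (a (n+1) + η)^2 := by nlinarith [ha0 (n+1)]
    have h3 : Real.exp (-β * ((n:ℝ)+1)) = Real.exp (-β) * Real.exp (-β) ^ n := by
      rw [heβpow, ← Real.exp_add]; ring_nf
    calc b (n+1) / (a (n+1) + η)^2 ≤ (d₂ * Real.exp (-β * ((n:ℝ)+1))) / η^2 :=
          div_le_div₀ (by positivity) h1 (by positivity) h2
      _ = (d₂ * Real.exp (-β) / η^2) * Real.exp (-β) ^ n := by rw [h3]; ring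
  have hgeo : Summable (fun n : ℕ => Real.exp (-β) ^ n) :=
    summable_geometric_of_lt_one (Real.exp_pos _).le heβ
  have hf : Summable (fun n : ℕ => b (n+1) / (a (n+1) + η)^2) :=
    Summable.of_nonneg_of_le hf0 hfb (hgeo.mul_left _)
  -- the threshold index
  set N : ℕ := ⌈-Real.log η / α⌉₊ with hNdef
  have hlogη : Real.log η < -α := by
    have := Real.log_lt_log hη hηα
    rwa [Real.log_exp] at this
  have hNval : 0 < -Real.log η / α := div_pos (by linarith) hα
  have hN1 : 1 ≤ N := Nat.one_le_ceil_iff.2 hNval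
  have hceil1 : -Real.log η / α ≤ (N:ℝ) := Nat.le_ceil _
  have hceil2 : (N:ℝ) < -Real.log η / α + 1 := Nat.ceil_lt_add_one hNval.le
  have hdiv : -Real.log η / α * α = -Real.log η := div_mul_cancel₀ _ (ne_of_gt hα)
  have hη1 : Real.exp (-(α * N)) ≤ η := by
    have h := mul_le_mul_of_nonneg_right hceil1 hα.le
    rw [hdiv] at h
    have : -(α * N) ≤ Real.log η := by nlinarith
    calc Real.exp (-(α * N)) ≤ Real.exp (Real.log η) := Real.exp_le_exp.2 this
      _ = η := Real.exp_log hη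
  have hη2 : η ≤ Real.exp α * Real.exp (-(α * N)) := by
    have h := mul_lt_mul_of_pos_right hceil2 hα
    rw [add_mul, hdiv, one_mul] at h
    have : Real.log η ≤ α - α * N := by nlinarith
    calc η = Real.exp (Real.log η) := (Real.exp_log hη).symm
      _ ≤ Real.exp (α - α * N) := Real.exp_le_exp.2 this
      _ = Real.exp α * Real.exp (-(α * N)) := by rw [← Real.exp_add]; ring_nf
  have hβα0 : 0 ≤ β / α := div_nonneg hβ.le hα.le
  have hexpβN : Real.exp (-(α * N)) ^ (β/α) = Real.exp (-(β * N)) := by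
    rw [← Real.exp_mul]; congr 1; field_simp
  constructor
  · -- LOWER BOUND: use the single term with index N
    have hterm : d₁ * Real.exp (-β) / (c₂+1)^2 * η ^ (β/α - 2)
        ≤ b N / (a N + η)^2 := by
      have hbN : d₁ * Real.exp (-(β * N)) ≤ b N := by
        have := (hb N hN1).1; rw [neg_mul] at this; exact this
      have hden : (a N + η)^2 ≤ (c₂+1)^2 * η^2 := by
        have h := (ha N hN1).2
        rw [neg_mul] at h
        have h'' := mul_le_mul_of_nonneg_left hη1 hc₂.le
        have h' : a N + η ≤ (c₂+1) * η := by nlinarith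
        calc (a N + η)^2 ≤ ((c₂+1)*η)^2 := pow_le_pow_left₀ (by linarith [ha0 N]) h' 2
          _ = (c₂+1)^2 * η^2 := mul_pow _ _ 2
      have hnum : Real.exp (-β) * η ^ (β/α) ≤ Real.exp (-(β * N)) := by
        rw [← hexpβN]
        have h1 : Real.exp (-α) * η ≤ Real.exp (-(α * N)) := by
          have he : (0:ℝ) < Real.exp α := Real.exp_pos _
          rw [Real.exp_neg]
          rw [inv_mul_le_iff₀ he]
          linarith [hη2]
        calc Real.exp (-β) * η ^ (β/α)
            = (Real.exp (-α) * η) ^ (β/α) := by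
              have e : -α * (β/α) = -β := by field_simp
              rw [Real.mul_rpow (Real.exp_pos _).le hη.le, ← Real.exp_mul, e]
          _ ≤ Real.exp (-(α * N)) ^ (β/α) :=
              Real.rpow_le_rpow (by positivity) h1 hβα0
      rw [hηγ, div_mul_div_comm]
      apply div_le_div₀ (hb0 N) _ (by nlinarith [ha0 N] : (0:ℝ) < (a N + η)^2) hden
      calc d₁ * Real.exp (-β) * η ^ (β/α) ≤ d₁ * Real.exp (-(β * N)) := by
            nlinarith [hnum, hd₁]
        _ ≤ b N := hbN
    calc d₁ * Real.exp (-β) / (c₂+1)^2 * η ^ (β/α - 2) ≤ b N / (a N + η)^2 := hterm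
      _ = b ((N-1) + 1) / (a ((N-1) + 1) + η)^2 := by
          rw [show N - 1 + 1 = N from by omega]
      _ ≤ ∑' n : ℕ, b (n + 1) / (a (n + 1) + η) ^ 2 :=
          Summable.le_tsum hf (N-1) (fun i _ => hf0 i)
  · -- UPPER BOUND
    rw [← Summable.sum_add_tsum_nat_add N hf]
    have hrN : r ^ N ≤ r * η ^ (β/α - 2) := by
      have h1 : Real.exp (α * N) ≤ Real.exp α / η := by
        rw [le_div_iff₀ hη]
        calc Real.exp (α * N) * η
            ≤ Real.exp (α * N) * (Real.exp α * Real.exp (-(α * N))) := by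
              nlinarith [Real.exp_pos (α * N), hη2]
          _ = Real.exp α := by
              rw [mul_comm (Real.exp α), ← mul_assoc, ← Real.exp_add]; simp
      have ht0 : (0:ℝ) ≤ (2*α - β)/α := div_nonneg (by linarith) hα.le
      have e1 : Real.exp (α * N) ^ ((2*α - β)/α) = Real.exp ((2*α - β) * N) := by
        rw [← Real.exp_mul]; congr 1; field_simp
      have e2 : Real.exp α ^ ((2*α - β)/α) = r := by
        rw [← Real.exp_mul, hr]; congr 1; field_simp
      have e3 : -((2*α - β)/α) = β/α - 2 := by field_simp; ring
      calc r ^ N = Real.exp ((2*α-β) * N) := hrpow N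
        _ = Real.exp (α * N) ^ ((2*α - β)/α) := e1.symm
        _ ≤ (Real.exp α / η) ^ ((2*α - β)/α) :=
            Real.rpow_le_rpow (Real.exp_pos _).le h1 ht0
        _ = r * η ^ (β/α - 2) := by
            rw [Real.div_rpow (Real.exp_pos _).le hη.le, e2, div_eq_mul_inv,
              ← Real.rpow_neg hη.le, e3]
    have hpartA : ∑ i ∈ Finset.range N, b (i+1) / (a (i+1) + η)^2
        ≤ d₂/c₁^2 * r^2/(r-1) * η ^ (β/α - 2) := by
      have hstep : ∀ i ∈ Finset.range N, b (i+1) / (a (i+1) + η)^2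
          ≤ d₂/c₁^2 * r ^ (i+1) := by
        intro i _
        have h1 : b (i+1) ≤ d₂ * Real.exp (-β * ((i:ℝ)+1)) := by
          have := (hb (i+1) (by omega)).2; push_cast at this; exact this
        have h2 : (c₁ * Real.exp (-α * ((i:ℝ)+1)))^2 ≤ (a (i+1) + η)^2 := by
          have h := (ha (i+1) (by omega)).1
          push_cast at h
          exact pow_le_pow_left₀ (by positivity) (by linarith [hη.le]) 2
        have hkey : Real.exp (-β * ((i:ℝ)+1))
            = Real.exp ((2*α-β) * ((i:ℕ)+1:ℕ)) * Real.exp (-α * ((i:ℝ)+1)) ^ 2 := by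
          rw [sq, ← Real.exp_add, ← Real.exp_add]
          congr 1; push_cast; ring
        calc b (i+1) / (a (i+1) + η)^2
            ≤ d₂ * Real.exp (-β * ((i:ℝ)+1)) / (c₁ * Real.exp (-α * ((i:ℝ)+1)))^2 :=
              div_le_div₀ (by positivity) h1 (by positivity) h2
          _ = d₂/c₁^2 * r ^ (i+1) := by
              rw [hrpow (i+1), hkey, mul_pow]
              field_simp
      calc ∑ i ∈ Finset.range N, b (i+1) / (a (i+1) + η)^2
          ≤ ∑ i ∈ Finset.range N, d₂/c₁^2 * r ^ (i+1) := Finset.sum_le_sum hstep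
        _ = d₂/c₁^2 * (r * ∑ i ∈ Finset.range N, r ^ i) := by
            rw [Finset.mul_sum, Finset.mul_sum]
            congr 1; ext i; ring
        _ = d₂/c₁^2 * (r * ((r ^ N - 1)/(r - 1))) := by
            rw [geom_sum_eq (by linarith : r ≠ 1)]
        _ ≤ d₂/c₁^2 * (r * ((r * η ^ (β/α - 2))/(r - 1))) := by
            gcongr
            linarith [hrN]
        _ = d₂/c₁^2 * r^2/(r-1) * η ^ (β/α - 2) := by
            field_simp
    have hpartB : (∑' i : ℕ, b ((i+N)+1) / (a ((i+N)+1) + η)^2)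
        ≤ d₂ * Real.exp (-β) / (1 - Real.exp (-β)) * η ^ (β/α - 2) := by
      have hg : ∀ i : ℕ, b ((i+N)+1) / (a ((i+N)+1) + η)^2
          ≤ (d₂ * Real.exp (-β * ((N:ℝ)+1)) / η^2) * Real.exp (-β) ^ i := by
        intro i
        have h1 : b ((i+N)+1) ≤ d₂ * Real.exp (-β * (((i:ℝ)+N)+1)) := by
          have h := (hb ((i+N)+1) (by omega)).2
          have e : -β * ((i+N+1 : ℕ) : ℝ) = -β * (((i:ℝ)+N)+1) := by push_cast; ring
          rwa [e] at h
        have h2 : η^2 ≤ (a ((i+N)+1) + η)^2 := by nlinarith [ha0 ((i+N)+1)]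
        have hkey : Real.exp (-β * (((i:ℝ)+N)+1))
            = Real.exp (-β * ((N:ℝ)+1)) * Real.exp (-β) ^ i := by
          rw [heβpow, ← Real.exp_add]; congr 1; ring
        calc b ((i+N)+1) / (a ((i+N)+1) + η)^2
            ≤ d₂ * Real.exp (-β * (((i:ℝ)+N)+1)) / η^2 :=
              div_le_div₀ (by positivity) h1 (by positivity) h2
          _ = (d₂ * Real.exp (-β * ((N:ℝ)+1)) / η^2) * Real.exp (-β) ^ i := by
              rw [hkey]; ring
      have hsum : (∑' i : ℕ, b ((i+N)+1) / (a ((i+N)+1) + η)^2)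
          ≤ (d₂ * Real.exp (-β * ((N:ℝ)+1)) / η^2) * (1 - Real.exp (-β))⁻¹ := by
        calc (∑' i : ℕ, b ((i+N)+1) / (a ((i+N)+1) + η)^2)
            ≤ ∑' i : ℕ, (d₂ * Real.exp (-β * ((N:ℝ)+1)) / η^2) * Real.exp (-β) ^ i :=
              Summable.tsum_le_tsum hg ((summable_nat_add_iff (f := fun n : ℕ => b (n+1) / (a (n+1) + η)^2) N).2 hf) (hgeo.mul_left _)
          _ = (d₂ * Real.exp (-β * ((N:ℝ)+1)) / η^2) * (1 - Real.exp (-β))⁻¹ := by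
              rw [tsum_mul_left, tsum_geometric_of_lt_one (Real.exp_pos _).le heβ]
      have hexpN : Real.exp (-(β * N)) ≤ η ^ (β/α) := by
        rw [← hexpβN]
        exact Real.rpow_le_rpow (Real.exp_pos _).le hη1 hβα0
      have hsplit : Real.exp (-β * ((N:ℝ)+1)) = Real.exp (-β) * Real.exp (-(β * N)) := by
        rw [← Real.exp_add]; congr 1; ring
      calc (∑' i : ℕ, b ((i+N)+1) / (a ((i+N)+1) + η)^2)
          ≤ (d₂ * Real.exp (-β * ((N:ℝ)+1)) / η^2) * (1 - Real.exp (-β))⁻¹ := hsum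
        _ = d₂ * Real.exp (-β) * Real.exp (-(β * N)) / η^2 * (1 - Real.exp (-β))⁻¹ := by
            rw [hsplit]; ring
        _ ≤ d₂ * Real.exp (-β) * η ^ (β/α) / η^2 * (1 - Real.exp (-β))⁻¹ := by
            gcongr
        _ = d₂ * Real.exp (-β) / (1 - Real.exp (-β)) * η ^ (β/α - 2) := by
            rw [hηγ]; field_simp
    calc (∑ i ∈ Finset.range N, b (i+1) / (a (i+1) + η)^2)
          + ∑' i : ℕ, b ((i+N)+1) / (a ((i+N)+1) + η)^2
        ≤ d₂/c₁^2 * r^2/(r-1) * η ^ (β/α - 2)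
          + d₂ * Real.exp (-β) / (1 - Real.exp (-β)) * η ^ (β/α - 2) :=
          add_le_add hpartA hpartB
      _ = (d₂/c₁^2 * r^2/(r-1) + d₂ * Real.exp (-β) / (1 - Real.exp (-β))) * η ^ (β/α - 2) := by
          ring
end

section
/- Fix 0 < ρ < r < 1. On the Hardy space of the annulus A_ρ with the orthonormal basis e_n (e_n(ζ) = ζⁿ for n ≥ 0, e_n(ζ) = (ζ/ρ)ⁿ for n < 0), the operator Kf(ζ) = ∫_{Γ_r} p(ζ, τ) f(τ) |dτ| with p(ζ,τ) = 1/(1-ζτ̄) + ρ²/(ζτ̄-ρ²) satisfies K e_n = λ_n e_n for all n ∈ ℤ, where λ_n = 2πr·r^{2n} for n ≥ 0 and λ_n = 2πr·(r/ρ)^{2n} for n < 0. -/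
/-- Orthonormal basis functions of the Hardy space of the annulus `A_ρ`. -/
noncomputable def eAnn (ρ : ℝ) (n : ℤ) (ζ : ℂ) : ℂ :=
  if 0 ≤ n then ζ ^ n else (ζ / (ρ : ℂ)) ^ n

/-- The reproducing kernel of `H²(A_ρ)`. -/
noncomputable def pAnn (ρ : ℝ) (ζ τ : ℂ) : ℂ :=
  1 / (1 - ζ * (starRingEnd ℂ) τ) + (ρ : ℂ) ^ 2 / (ζ * (starRingEnd ℂ) τ - (ρ : ℂ) ^ 2)

/-- Eigenvalues: `λ_n = 2πr·r^{2n}` for `n ≥ 0`, `λ_n = 2πr·(r/ρ)^{2n}` for `n < 0`. -/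
noncomputable def lamAnn (ρ r : ℝ) (n : ℤ) : ℝ :=
  if 0 ≤ n then 2 * Real.pi * r * r ^ (2 * n) else 2 * Real.pi * r * (r / ρ) ^ (2 * n)

open Complex Metric intervalIntegral Real

lemma cauchy_unit (f : ℂ → ℂ) (w : ℂ) (hw : ‖w‖ < 1)
    (hf : ∀ z ∈ closedBall (0:ℂ) 1, DifferentiableAt ℂ f z) :
    (∫ t in (0:ℝ)..(2*Real.pi),
        Complex.exp ((t:ℂ) * Complex.I) *
          ((Complex.exp ((t:ℂ) * Complex.I) - w)⁻¹ * f (Complex.exp ((t:ℂ) * Complex.I))))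
      = 2 * Real.pi * f w := by
  have h := Complex.circleIntegral_sub_inv_smul_of_differentiable_on_off_countable
    (s := ∅) (c := 0) (R := 1) (f := f) (w := w) Set.countable_empty
    (by simpa using hw)
    (fun z hz => (hf z hz).continuousAt.continuousWithinAt)
    (fun z hz => hf z (ball_subset_closedBall hz.1))
  rw [circleIntegral] at h
  simp only [deriv_circleMap, circleMap, smul_eq_mul, zero_add, one_mul,
    Complex.ofReal_one] at h
  have h2 : (∫ t in (0:ℝ)..(2*Real.pi), Complex.I *
      (Complex.exp ((t:ℂ) * Complex.I) *
        ((Complex.exp ((t:ℂ) * Complex.I) - w)⁻¹ * f (Complex.exp ((t:ℂ) * Complex.I)))))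
      = Complex.I * (2 * Real.pi * f w) := by
    have e : ∀ t : ℝ, Complex.I *
        (Complex.exp ((t:ℂ) * Complex.I) *
          ((Complex.exp ((t:ℂ) * Complex.I) - w)⁻¹ * f (Complex.exp ((t:ℂ) * Complex.I))))
        = Complex.exp ((t:ℂ) * Complex.I) * Complex.I *
          ((Complex.exp ((t:ℂ) * Complex.I) - w)⁻¹ * f (Complex.exp ((t:ℂ) * Complex.I))) :=
      fun t => by ring
    rw [intervalIntegral.integral_congr (fun t _ => e t), h]; ring
  rw [intervalIntegral.integral_const_mul] at h2
  exact mul_left_cancel₀ Complex.I_ne_zero h2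

/-- the integral operator `Kf(ζ) = ∫_{Γ_r} p(ζ,τ) f(τ) |dτ|` on the
Hardy space of `A_ρ` satisfies `K e_n = λ_n e_n` for all `n ∈ ℤ`. -/
theorem stmt11 (ρ r : ℝ) (hρ : 0 < ρ) (hρr : ρ < r) (hr : r < 1) (n : ℤ) (ζ : ℂ)
    (hζ : ρ < ‖ζ‖) (hζ1 : ‖ζ‖ < 1) :
    (∫ t in (0:ℝ)..(2 * Real.pi),
        pAnn ρ ζ ((r : ℂ) * Complex.exp (Complex.I * (t : ℂ))) *
          eAnn ρ n ((r : ℂ) * Complex.exp (Complex.I * (t : ℂ))) * (r : ℂ))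
      = (lamAnn ρ r n : ℂ) * eAnn ρ n ζ := by
  have hr0 : (0:ℝ) < r := hρ.trans hρr
  have hζ0 : ζ ≠ 0 := by
    intro h; rw [h] at hζ; simp at hζ; linarith
  have hrne : (r:ℂ) ≠ 0 := by exact_mod_cast hr0.ne'
  have hρne : (ρ:ℂ) ≠ 0 := by exact_mod_cast hρ.ne'
  have hone : (1:ℂ) - (ρ:ℂ)^2 ≠ 0 := by
    intro h
    have h' : ((1 - ρ^2 : ℝ) : ℂ) = 0 := by push_cast; linear_combination h
    have : (1 - ρ^2 : ℝ) = 0 := by exact_mod_cast h'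
    nlinarith
  rcases le_or_gt 0 n with hn | hn
  · -- case n ≥ 0
    lift n to ℕ using hn with m
    have hζr : ‖ζ * r‖ < 1 := by
      rw [norm_mul, Complex.norm_real, Real.norm_eq_abs, abs_of_pos hr0]
      nlinarith [norm_nonneg ζ]
    set f : ℂ → ℂ := fun z => (r:ℂ)^(m+1) * z^m *
        (ζ*r*(1 - (ρ:ℂ)^2)) / (ζ*r - (ρ:ℂ)^2 * z) with hfdef
    have hf : ∀ z ∈ closedBall (0:ℂ) 1, DifferentiableAt ℂ f z := by
      intro z hz
      simp only [mem_closedBall, dist_zero_right] at hz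
      have hden : ζ*(r:ℂ) - (ρ:ℂ)^2 * z ≠ 0 := by
        intro h
        have h1 : ‖ζ*(r:ℂ)‖ = ‖(ρ:ℂ)^2 * z‖ := by
          rw [sub_eq_zero.1 h]
        rw [norm_mul, norm_mul, norm_pow, Complex.norm_real, Real.norm_eq_abs, Complex.norm_real, Real.norm_eq_abs,
          abs_of_pos hr0, abs_of_pos hρ] at h1
        nlinarith [norm_nonneg z, (norm_pos_iff.mpr hζ0)]
      fun_prop (disch := assumption)
    have key := cauchy_unit f (ζ * r) hζr hf
    have congr1 : ∀ t : ℝ,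
        pAnn ρ ζ ((r : ℂ) * Complex.exp (Complex.I * (t : ℂ))) *
            eAnn ρ (m:ℤ) ((r : ℂ) * Complex.exp (Complex.I * (t : ℂ))) * (r : ℂ)
          = Complex.exp ((t:ℂ) * Complex.I) *
            ((Complex.exp ((t:ℂ) * Complex.I) - ζ*r)⁻¹ * f (Complex.exp ((t:ℂ) * Complex.I))) := by
      intro t
      rw [mul_comm Complex.I (t:ℂ)]
      set u := Complex.exp ((t:ℂ) * Complex.I) with hudef
      have hu1 : ‖u‖ = 1 := Complex.norm_exp_ofReal_mul_I t
      have hu : u ≠ 0 := Complex.exp_ne_zero _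
      have hconj : (starRingEnd ℂ) ((r:ℂ) * u) = r * u⁻¹ := by
        rw [map_mul, Complex.conj_ofReal, hudef, ← Complex.exp_conj]
        simp [Complex.exp_neg]
      have h3 : u - ζ*r ≠ 0 := by
        intro h
        rw [← sub_eq_zero.1 h, hu1] at hζr; linarith
      have h4 : ζ*(r:ℂ) - (ρ:ℂ)^2 * u ≠ 0 := by
        intro h
        have h1 : ‖ζ*(r:ℂ)‖ = ‖(ρ:ℂ)^2 * u‖ := by
          rw [sub_eq_zero.1 h]
        rw [norm_mul, norm_mul, norm_pow, hu1, Complex.norm_real, Real.norm_eq_abs, Complex.norm_real, Real.norm_eq_abs,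
          abs_of_pos hr0, abs_of_pos hρ] at h1
        nlinarith
      rw [pAnn, eAnn, if_pos (Int.natCast_nonneg m), hconj, hfdef]
      push_cast [zpow_natCast]
      have e1 : 1 - ζ * ((r:ℂ) * u⁻¹) = (u - ζ*r)/u := by field_simp
      have e2 : ζ * ((r:ℂ) * u⁻¹) - (ρ:ℂ)^2 = (ζ*r - (ρ:ℂ)^2*u)/u := by
        field_simp
      rw [e1, e2, one_div_div, div_div_eq_mul_div, div_add_div _ _ h3 h4,
        inv_mul_eq_div, div_div]
      field_simp [h3, h4]
      ring
    calc (∫ t in (0:ℝ)..(2 * Real.pi),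
          pAnn ρ ζ ((r : ℂ) * Complex.exp (Complex.I * (t : ℂ))) *
            eAnn ρ (m:ℤ) ((r : ℂ) * Complex.exp (Complex.I * (t : ℂ))) * (r : ℂ))
        = ∫ t in (0:ℝ)..(2*Real.pi),
          Complex.exp ((t:ℂ) * Complex.I) *
            ((Complex.exp ((t:ℂ) * Complex.I) - ζ*r)⁻¹ * f (Complex.exp ((t:ℂ) * Complex.I))) :=
          intervalIntegral.integral_congr (fun t _ => congr1 t)
      _ = 2 * Real.pi * f (ζ * r) := key
      _ = (lamAnn ρ r (m:ℤ) : ℂ) * eAnn ρ (m:ℤ) ζ := by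
          rw [hfdef, lamAnn, eAnn, if_pos (Int.natCast_nonneg m),
            if_pos (Int.natCast_nonneg m),
            show (2 * (m:ℤ)) = ((2*m:ℕ):ℤ) by push_cast; ring]
          simp only [zpow_natCast]
          push_cast
          rw [show ζ*(r:ℂ) - (ρ:ℂ)^2 * (ζ*(r:ℂ)) = ζ*(r:ℂ)*(1 - (ρ:ℂ)^2) by ring]
          rw [mul_div_assoc, mul_div_mul_left _ _ (mul_ne_zero hζ0 hrne),
            div_self hone]
          ring
  · -- case n < 0
    obtain ⟨m, rfl⟩ : ∃ m : ℕ, n = -((m:ℤ)+1) := ⟨(-n-1).toNat, by omega⟩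
    have hnneg : ¬ (0:ℤ) ≤ -((m:ℤ)+1) := by omega
    have habsζr : ‖ζ‖ * r < 1 := by nlinarith [norm_nonneg ζ]
    have hρ2lt : ρ^2 < ‖ζ‖ * r := by nlinarith
    set w : ℂ := (ρ:ℂ)^2 / (ζ * r) with hwdef
    have hζrC : ζ * (r:ℂ) ≠ 0 := mul_ne_zero hζ0 hrne
    have hw : ‖w‖ < 1 := by
      rw [hwdef, norm_div, norm_pow, norm_mul, Complex.norm_real, Real.norm_eq_abs, abs_of_pos hρ,
        Complex.norm_real, Real.norm_eq_abs, abs_of_pos hr0]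
      rw [div_lt_one (mul_pos (hρ.trans hζ) hr0)]
      exact hρ2lt
    set f : ℂ → ℂ := fun z => (ρ:ℂ)^(m+1) * z^(m+1) *
        (1 - (ρ:ℂ)^2) / ((r:ℂ)^m * (1 - ζ*r*z)) with hfdef
    have hf : ∀ z ∈ closedBall (0:ℂ) 1, DifferentiableAt ℂ f z := by
      intro z hz
      simp only [mem_closedBall, dist_zero_right] at hz
      have hden : (r:ℂ)^m * (1 - ζ*r*z) ≠ 0 := by
        apply mul_ne_zero (pow_ne_zero _ hrne)
        intro h
        have h1 : ‖ζ*(r:ℂ)*z‖ = 1 := by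
          rw [← sub_eq_zero.1 h]; simp
        rw [norm_mul, norm_mul, Complex.norm_real, Real.norm_eq_abs, abs_of_pos hr0] at h1
        nlinarith [norm_nonneg z, (norm_pos_iff.mpr hζ0)]
      fun_prop (disch := assumption)
    have key := cauchy_unit f w hw hf
    have hsub : (∫ t in (0:ℝ)..(2 * Real.pi),
          pAnn ρ ζ ((r : ℂ) * Complex.exp (Complex.I * (t : ℂ))) *
            eAnn ρ (-((m:ℤ)+1)) ((r : ℂ) * Complex.exp (Complex.I * (t : ℂ))) * (r : ℂ))
        = ∫ t in (0:ℝ)..(2 * Real.pi),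
          pAnn ρ ζ ((r : ℂ) * Complex.exp (Complex.I * ((2*Real.pi - t : ℝ) : ℂ))) *
            eAnn ρ (-((m:ℤ)+1)) ((r : ℂ) * Complex.exp (Complex.I * ((2*Real.pi - t : ℝ) : ℂ))) * (r : ℂ) := by
      rw [intervalIntegral.integral_comp_sub_left
        (fun s => pAnn ρ ζ ((r : ℂ) * Complex.exp (Complex.I * (s : ℂ))) *
          eAnn ρ (-((m:ℤ)+1)) ((r : ℂ) * Complex.exp (Complex.I * (s : ℂ))) * (r : ℂ))
        (2*Real.pi)]
      norm_num
    have congr2 : ∀ t : ℝ,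
        pAnn ρ ζ ((r : ℂ) * Complex.exp (Complex.I * ((2*Real.pi - t : ℝ) : ℂ))) *
            eAnn ρ (-((m:ℤ)+1)) ((r : ℂ) * Complex.exp (Complex.I * ((2*Real.pi - t : ℝ) : ℂ))) * (r : ℂ)
          = Complex.exp ((t:ℂ) * Complex.I) *
            ((Complex.exp ((t:ℂ) * Complex.I) - w)⁻¹ * f (Complex.exp ((t:ℂ) * Complex.I))) := by
      intro t
      have hexp : Complex.exp (Complex.I * ((2*Real.pi - t : ℝ) : ℂ))
          = (Complex.exp ((t:ℂ) * Complex.I))⁻¹ := by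
        push_cast
        rw [show Complex.I * (2*(Real.pi:ℂ) - (t:ℂ))
            = 2*(Real.pi:ℂ)*Complex.I + -((t:ℂ)*Complex.I) by ring,
          Complex.exp_add, Complex.exp_two_pi_mul_I, one_mul, Complex.exp_neg]
      rw [hexp]
      set u := Complex.exp ((t:ℂ) * Complex.I) with hudef
      have hu1 : ‖u‖ = 1 := Complex.norm_exp_ofReal_mul_I t
      have hu : u ≠ 0 := Complex.exp_ne_zero _
      have hconj : (starRingEnd ℂ) ((r:ℂ) * u⁻¹) = r * u := by
        rw [map_mul, Complex.conj_ofReal, map_inv₀, hudef, ← Complex.exp_conj]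
        simp [Complex.exp_neg]
      have g1 : (1:ℂ) - ζ*((r:ℂ)*u) ≠ 0 := by
        intro h
        have h1 : ‖ζ*((r:ℂ)*u)‖ = 1 := by rw [← sub_eq_zero.1 h]; simp
        rw [norm_mul, norm_mul, hu1, Complex.norm_real, Real.norm_eq_abs, abs_of_pos hr0] at h1
        nlinarith
      have g2 : ζ*((r:ℂ)*u) - (ρ:ℂ)^2 ≠ 0 := by
        intro h
        have h1 : ‖ζ*((r:ℂ)*u)‖ = ρ^2 := by
          rw [sub_eq_zero.1 h, norm_pow, Complex.norm_real, Real.norm_eq_abs, abs_of_pos hρ]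
        rw [norm_mul, norm_mul, hu1, Complex.norm_real, Real.norm_eq_abs, abs_of_pos hr0] at h1
        nlinarith
      have g3 : u - w ≠ 0 := by
        intro h
        rw [← sub_eq_zero.1 h, hu1] at hw; linarith
      have hden : (r:ℂ)^m * (1 - ζ*r*u) ≠ 0 := by
        apply mul_ne_zero (pow_ne_zero _ hrne)
        intro h; apply g1; rw [← h]; ring
      rw [pAnn, eAnn, if_neg hnneg, hconj, hfdef]
      have e0 : ((r:ℂ) * u⁻¹ / (ρ:ℂ)) ^ (-((m:ℤ)+1))
          = (u*ρ)^(m+1)/(r:ℂ)^(m+1) := by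
        rw [show (-((m:ℤ)+1)) = -(((m+1:ℕ)):ℤ) by push_cast; ring, zpow_neg,
          zpow_natCast, show (r:ℂ) * u⁻¹ / (ρ:ℂ) = r/(u*ρ) by field_simp,
          div_pow, inv_div]
      have ew : u - w = (ζ*r*u - (ρ:ℂ)^2)/(ζ*r) := by
        rw [hwdef]; field_simp
      rw [e0, ew, inv_div]
      have e2 : ζ*((r:ℂ)*u) - (ρ:ℂ)^2 = ζ*r*u - (ρ:ℂ)^2 := by ring
      have g2' : ζ*(r:ℂ)*u - (ρ:ℂ)^2 ≠ 0 := by rw [← e2]; exact g2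
      field_simp [g1, g2, g2', hden, hu, hρne, hrne, hζ0, (show (1:ℂ) - ζ*r*u ≠ 0 by intro h; apply g1; rw [← h]; ring)]
      ring
    have final : 2 * (Real.pi:ℂ) * f w
        = (lamAnn ρ r (-((m:ℤ)+1)) : ℂ) * eAnn ρ (-((m:ℤ)+1)) ζ := by
      have hw1 : 1 - ζ*(r:ℂ)*w = 1 - (ρ:ℂ)^2 := by
        rw [hwdef]; field_simp
      have hfw : f w = (ρ:ℂ)^(m+1) * w^(m+1) / (r:ℂ)^m := by
        rw [hfdef]
        show (ρ:ℂ)^(m+1) * w^(m+1) * (1 - (ρ:ℂ)^2) / ((r:ℂ)^m * (1 - ζ*(r:ℂ)*w)) = _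
        rw [hw1, mul_div_mul_right _ _ hone]
      rw [hfw, hwdef, lamAnn, eAnn, if_neg hnneg, if_neg hnneg,
        show (2 * (-((m:ℤ)+1))) = -(((2*m+2:ℕ)):ℤ) by push_cast; ring,
        show (-((m:ℤ)+1)) = -(((m+1:ℕ)):ℤ) by push_cast; ring,
        zpow_neg, zpow_neg, zpow_natCast, zpow_natCast]
      push_cast
      rw [div_pow, div_pow, div_pow]
      field_simp [hone, hζ0, hrne, hρne]
      ring
    rw [hsub, intervalIntegral.integral_congr (fun t _ => congr2 t), key, final]
end

section
/- (Annulus extrapolation bound) Let 0 < ρ < r < 1, A_ρ = {ρ < |ζ| < 1}, Γ = {|ζ| = r}, and z ∈ A_ρ with |z| ≠ r. Define γ(z) = ln|z|/ln r if r < |z| < 1, and γ(z) = ln(|z|/ρ)/ln(r/ρ) if ρ < |z| < r. Then there is a constant C > 0 such that for every ε > 0 and every f analytic on A_ρ with ‖f‖_{H²(A_ρ)} ≤ 1 and ‖f‖_{L²(Γ)} ≤ ε, one has |f(z)| ≤ C ε^{γ(z)}. -/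
open Complex Metric Set Real intervalIntegral

/-- The extrapolation exponent for the annulus `A_ρ` with data on the circle `Γ_r`. -/
noncomputable def gammaAnn (ρ r : ℝ) (z : ℂ) : ℝ :=
  if r < ‖z‖ then Real.log (‖z‖) / Real.log r
  else Real.log (‖z‖ / ρ) / Real.log (r / ρ)


open Complex Metric Set Real intervalIntegral

/-- Cauchy-Schwarz on `[0, 2π]`. -/
lemma cs_interval (h : ℝ → ℝ) (hc : Continuous h) :
    (∫ θ in (0:ℝ)..(2*π), h θ) ^ 2 ≤ (2*π) * ∫ θ in (0:ℝ)..(2*π), (h θ)^2 := by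
  have hpi : (0:ℝ) < 2*π := by positivity
  set I1 := ∫ θ in (0:ℝ)..(2*π), h θ with hI1
  set c : ℝ := I1 / (2*π) with hc'
  have hint1 : IntervalIntegrable h MeasureTheory.volume 0 (2*π) := hc.intervalIntegrable _ _
  have hint2 : IntervalIntegrable (fun θ => (h θ)^2) MeasureTheory.volume 0 (2*π) :=
    (hc.pow 2).intervalIntegrable _ _
  have key : (0:ℝ) ≤ ∫ θ in (0:ℝ)..(2*π), (h θ - c)^2 := by
    apply intervalIntegral.integral_nonneg hpi.le
    intro u _; positivity
  have expand : (∫ θ in (0:ℝ)..(2*π), (h θ - c)^2)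
      = (∫ θ in (0:ℝ)..(2*π), (h θ)^2) - 2*c*I1 + (2*π)*c^2 := by
    have : ∀ θ : ℝ, (h θ - c)^2 = (h θ)^2 - (2*c) * h θ + c^2 := by intro θ; ring
    rw [intervalIntegral.integral_congr (g := fun θ => (h θ)^2 - (2*c) * h θ + c^2)
      (fun θ _ => this θ)]
    rw [intervalIntegral.integral_add (hint2.sub ((hint1.const_mul (2*c)))) (intervalIntegrable_const),
      intervalIntegral.integral_sub hint2 (hint1.const_mul (2*c)),
      intervalIntegral.integral_const_mul, intervalIntegral.integral_const]
    simp only [← hI1, smul_eq_mul]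
    ring
  rw [expand] at key
  have : 2*c*I1 - (2*π)*c^2 ≤ ∫ θ in (0:ℝ)..(2*π), (h θ)^2 := by linarith
  have hcI : 2*c*I1 - (2*π)*c^2 = I1^2/(2*π) := by
    rw [hc']; field_simp; ring
  rw [hcI] at this
  calc I1^2 = (I1^2/(2*π)) * (2*π) := by field_simp
  _ ≤ (∫ θ in (0:ℝ)..(2*π), (h θ)^2) * (2*π) := by
      apply mul_le_mul_of_nonneg_right this hpi.le
  _ = (2*π) * ∫ θ in (0:ℝ)..(2*π), (h θ)^2 := by ring

/-- L¹ bound for circle integrals. -/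
lemma norm_circleIntegral_le (g : ℂ → ℂ) (s : ℝ) (hs : 0 ≤ s) :
    ‖∮ w in C(0, s), g w‖ ≤ ∫ θ in (0:ℝ)..(2*π), ‖g (circleMap 0 s θ)‖ * s := by
  have hpi : (0:ℝ) ≤ 2*π := by positivity
  rw [circleIntegral]
  refine (intervalIntegral.norm_integral_le_integral_norm hpi).trans_eq ?_
  refine intervalIntegral.integral_congr fun θ _ => ?_
  rw [norm_smul, deriv_circleMap, mul_comm]
  simp [norm_circleMap_zero, _root_.abs_of_nonneg hs]


/-- Main quantitative bound: circle integral bounded pointwise by a multiple of `f`,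
with `L²` control on `f`. -/
lemma circle_bound (f g : ℂ → ℂ) (s c Q : ℝ) (hs : 0 < s) (hc : 0 ≤ c) (hQ : 0 ≤ Q)
    (hfc : ContinuousOn f (sphere (0:ℂ) s)) (hgc : ContinuousOn g (sphere (0:ℂ) s))
    (hpt : ∀ w ∈ sphere (0:ℂ) s, ‖g w‖ ≤ c * ‖f w‖)
    (hL2 : (∫ θ in (0:ℝ)..(2*π), ‖f (circleMap 0 s θ)‖^2 * s) ≤ Q) :
    ‖∮ w in C(0,s), g w‖ ≤ c * Real.sqrt (2*π*s) * Real.sqrt Q := by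
  have hpi : (0:ℝ) ≤ 2*π := by positivity
  have hmem : ∀ θ : ℝ, circleMap 0 s θ ∈ sphere (0:ℂ) s := fun θ => circleMap_mem_sphere 0 hs.le θ
  have hhf : Continuous (fun θ => ‖f (circleMap 0 s θ)‖) :=
    (hfc.comp_continuous (continuous_circleMap 0 s) hmem).norm
  have hhg : Continuous (fun θ => ‖g (circleMap 0 s θ)‖) :=
    (hgc.comp_continuous (continuous_circleMap 0 s) hmem).norm
  have step1 := norm_circleIntegral_le g s hs.le
  have step2 : (∫ θ in (0:ℝ)..(2*π), ‖g (circleMap 0 s θ)‖ * s)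
      ≤ ∫ θ in (0:ℝ)..(2*π), (c * ‖f (circleMap 0 s θ)‖) * s := by
    apply intervalIntegral.integral_mono_on hpi
      ((hhg.mul continuous_const).intervalIntegrable _ _)
      (((continuous_const.mul hhf).mul continuous_const).intervalIntegrable _ _)
    intro θ _
    exact mul_le_mul_of_nonneg_right (hpt _ (hmem θ)) hs.le
  have step3 : (∫ θ in (0:ℝ)..(2*π), (c * ‖f (circleMap 0 s θ)‖) * s)
      = (c * s) * ∫ θ in (0:ℝ)..(2*π), ‖f (circleMap 0 s θ)‖ := by
    rw [← intervalIntegral.integral_const_mul]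
    apply intervalIntegral.integral_congr
    intro θ _; ring
  have hI2 : (∫ θ in (0:ℝ)..(2*π), ‖f (circleMap 0 s θ)‖^2) ≤ Q / s := by
    rw [le_div_iff₀ hs]
    calc (∫ θ in (0:ℝ)..(2*π), ‖f (circleMap 0 s θ)‖^2) * s
        = ∫ θ in (0:ℝ)..(2*π), ‖f (circleMap 0 s θ)‖^2 * s := by
          rw [← intervalIntegral.integral_mul_const]
    _ ≤ Q := hL2
  have step4 : (∫ θ in (0:ℝ)..(2*π), ‖f (circleMap 0 s θ)‖)
      ≤ Real.sqrt (2*π * (Q/s)) := by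
    have h1 := cs_interval (fun θ => ‖f (circleMap 0 s θ)‖) hhf
    have h2 : (0:ℝ) ≤ ∫ θ in (0:ℝ)..(2*π), ‖f (circleMap 0 s θ)‖ :=
      intervalIntegral.integral_nonneg hpi (fun u _ => norm_nonneg _)
    have h3 : (∫ θ in (0:ℝ)..(2*π), ‖f (circleMap 0 s θ)‖)^2 ≤ 2*π * (Q/s) := by
      refine h1.trans ?_
      exact mul_le_mul_of_nonneg_left hI2 hpi
    calc (∫ θ in (0:ℝ)..(2*π), ‖f (circleMap 0 s θ)‖)
        = Real.sqrt ((∫ θ in (0:ℝ)..(2*π), ‖f (circleMap 0 s θ)‖)^2) := by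
          rw [Real.sqrt_sq h2]
    _ ≤ Real.sqrt (2*π * (Q/s)) := Real.sqrt_le_sqrt h3
  have final : (c * s) * Real.sqrt (2*π * (Q/s)) = c * Real.sqrt (2*π*s) * Real.sqrt Q := by
    have h1 : s * Real.sqrt (2*π*(Q/s)) = Real.sqrt (2*π*s*Q) := by
      rw [← Real.sqrt_sq hs.le, ← Real.sqrt_mul (sq_nonneg s)]
      congr 1
      field_simp
      rw [Real.sq_sqrt (sq_nonneg _)]; ring
    have h2 : Real.sqrt (2*π*s*Q) = Real.sqrt (2*π*s) * Real.sqrt Q :=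
      Real.sqrt_mul (by positivity) Q
    rw [mul_assoc, h1, h2]; ring
  calc ‖∮ w in C(0,s), g w‖ ≤ ∫ θ in (0:ℝ)..(2*π), ‖g (circleMap 0 s θ)‖ * s := step1
  _ ≤ ∫ θ in (0:ℝ)..(2*π), (c * ‖f (circleMap 0 s θ)‖) * s := step2
  _ = (c * s) * ∫ θ in (0:ℝ)..(2*π), ‖f (circleMap 0 s θ)‖ := step3
  _ ≤ (c * s) * Real.sqrt (2*π * (Q/s)) := by
      apply mul_le_mul_of_nonneg_left step4 (by positivity)
  _ = c * Real.sqrt (2*π*s) * Real.sqrt Q := final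


lemma circleIntegral_add {f g : ℂ → ℂ} {c : ℂ} {R : ℝ} (hf : CircleIntegrable f c R)
    (hg : CircleIntegrable g c R) :
    (∮ w in C(c,R), (f w + g w)) = (∮ w in C(c,R), f w) + ∮ w in C(c,R), g w := by
  simp only [circleIntegral, smul_add]
  rw [intervalIntegral.integral_add hf.out hg.out]


lemma circleIntegral_finset_sum {ι : Type*} (s : Finset ι) (g : ι → ℂ → ℂ) (c : ℂ) (R : ℝ)
    (h : ∀ i ∈ s, CircleIntegrable (g i) c R) :
    (∮ w in C(c,R), (∑ i ∈ s, g i w)) = ∑ i ∈ s, ∮ w in C(c,R), g i w := by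
  simp only [circleIntegral]
  rw [← intervalIntegral.integral_finset_sum (fun i hi => (h i hi).out)]
  apply intervalIntegral.integral_congr
  intro θ _
  simp [Finset.mul_sum]

lemma kernel_outer (N : ℕ) (z w : ℂ) (hw : w ≠ 0) (hwz : w ≠ z) :
    (w - z)⁻¹ = (∑ n ∈ Finset.range N, z^n * (w^(n+1))⁻¹) + (z/w)^N * (w-z)⁻¹ := by
  have hwz' : w - z ≠ 0 := sub_ne_zero.2 hwz
  induction N with
  | zero => simp
  | succ N ih =>
    rw [Finset.sum_range_succ]
    conv_lhs => rw [ih]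
    have : (z/w)^N * (w-z)⁻¹ = z^N * (w^(N+1))⁻¹ + (z/w)^(N+1) * (w-z)⁻¹ := by
      rw [div_pow, div_pow]
      field_simp
      ring
    rw [this]
    ring

lemma kernel_inner (M : ℕ) (z w : ℂ) (hz : z ≠ 0) (hwz : w ≠ z) :
    (w - z)⁻¹ = -(∑ m ∈ Finset.range M, w^m * (z^(m+1))⁻¹) + (w/z)^M * (w-z)⁻¹ := by
  have hwz' : w - z ≠ 0 := sub_ne_zero.2 hwz
  induction M with
  | zero => simp
  | succ M ih =>
    rw [Finset.sum_range_succ]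
    conv_lhs => rw [ih]
    have : (w/z)^M * (w-z)⁻¹ = -(w^M * (z^(M+1))⁻¹) + (w/z)^(M+1) * (w-z)⁻¹ := by
      rw [div_pow, div_pow]
      field_simp
      ring
    rw [this]
    ring

section annulus
variable (ρ : ℝ)

lemma annulus_isOpen : IsOpen {w : ℂ | ρ < ‖w‖ ∧ ‖w‖ < 1} := by
  have : {w : ℂ | ρ < ‖w‖ ∧ ‖w‖ < 1} = norm ⁻¹' (Set.Ioo ρ 1) := rfl
  rw [this]
  exact isOpen_Ioo.preimage continuous_norm

lemma annulus_indep (hρ : 0 < ρ) (g : ℂ → ℂ)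
    (hg : DifferentiableOn ℂ g {w : ℂ | ρ < ‖w‖ ∧ ‖w‖ < 1})
    {s₁ s₂ : ℝ} (h1 : ρ < s₁) (h12 : s₁ ≤ s₂) (h2 : s₂ < 1) :
    (∮ w in C(0, s₂), g w) = ∮ w in C(0, s₁), g w := by
  set U := {w : ℂ | ρ < ‖w‖ ∧ ‖w‖ < 1} with hU
  have hsub : closedBall (0:ℂ) s₂ \ ball 0 s₁ ⊆ U := by
    intro w hw
    obtain ⟨hw1, hw2⟩ := hw
    rw [mem_closedBall_zero_iff] at hw1
    rw [mem_ball_zero_iff] at hw2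
    push_neg at hw2
    exact ⟨h1.trans_le hw2, lt_of_le_of_lt hw1 h2⟩
  apply Complex.circleIntegral_eq_of_differentiable_on_annulus_off_countable
    (hρ.trans h1) h12 countable_empty (hg.continuousOn.mono hsub)
  intro w hw
  apply (hg.differentiableAt ((annulus_isOpen ρ).mem_nhds _))
  exact hsub ⟨ball_subset_closedBall hw.1.1, fun hb => hw.1.2 (ball_subset_closedBall hb)⟩

lemma annulus_cauchy (hρ : 0 < ρ) (f : ℂ → ℂ)
    (hf : DifferentiableOn ℂ f {w : ℂ | ρ < ‖w‖ ∧ ‖w‖ < 1}) (z : ℂ)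
    {s₁ s₂ : ℝ} (h1 : ρ < s₁) (hs1z : s₁ < ‖z‖) (hzs2 : ‖z‖ < s₂)
    (h2 : s₂ < 1) :
    (∮ w in C(0,s₂), (w - z)⁻¹ * f w) - (2*π*Complex.I) * f z
      = ∮ w in C(0,s₁), (w - z)⁻¹ * f w := by
  set U := {w : ℂ | ρ < ‖w‖ ∧ ‖w‖ < 1} with hU
  have h01 : 0 < s₁ := hρ.trans h1
  have hzU : z ∈ U := ⟨h1.trans hs1z, hzs2.trans h2⟩
  have hF : DifferentiableOn ℂ (dslope f z) U :=
    (differentiableOn_dslope ((annulus_isOpen ρ).mem_nhds hzU)).2 hf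
  have sphere_sub : ∀ {s : ℝ}, ρ < s → s < 1 → sphere (0:ℂ) s ⊆ U := by
    intro s hs1 hs2 w hw
    rw [mem_sphere_zero_iff_norm] at hw
    exact ⟨hw ▸ hs1, hw ▸ hs2⟩
  have key : ∀ (s : ℝ), ρ < s → s < 1 → ‖z‖ ≠ s →
      (∮ w in C(0,s), dslope f z w)
        = (∮ w in C(0,s), (w - z)⁻¹ * f w) - (∮ w in C(0,s), (w - z)⁻¹) * f z := by
    intro s hs1 hs2 hne
    have h0s : 0 < s := hρ.trans hs1
    have hne' : ∀ w ∈ sphere (0:ℂ) s, w ≠ z := by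
      intro w hw
      rw [mem_sphere_zero_iff_norm] at hw
      intro hc
      rw [hc] at hw
      exact hne hw
    have hinv : ContinuousOn (fun w => (w - z)⁻¹) (sphere (0:ℂ) s) := by
      apply ContinuousOn.inv₀ (by fun_prop)
      intro w hw
      exact sub_ne_zero.2 (hne' w hw)
    have hfc : ContinuousOn f (sphere (0:ℂ) s) :=
      hf.continuousOn.mono (sphere_sub hs1 hs2)
    have e1 : (∮ w in C(0,s), dslope f z w)
        = ∮ w in C(0,s), ((w - z)⁻¹ * f w - (w - z)⁻¹ * f z) := by
      apply circleIntegral.integral_congr h0s.le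
      intro w hw
      rw [dslope_of_ne f (hne' w hw)]
      simp only [slope_def_field, div_eq_inv_mul]
      ring
    rw [e1, circleIntegral.integral_sub (f := fun w => (w - z)⁻¹ * f w) (g := fun w => (w - z)⁻¹ * f z) ((hinv.mul hfc).circleIntegrable h0s.le)
      ((hinv.mul continuousOn_const).circleIntegrable h0s.le)]
    congr 1
    have := circleIntegral.integral_smul_const (fun w => (w - z)⁻¹) (f z) 0 s
    simpa [smul_eq_mul] using this
  have indep : (∮ w in C(0, s₂), dslope f z w) = ∮ w in C(0, s₁), dslope f z w :=
    annulus_indep ρ hρ _ hF h1 (hs1z.trans hzs2).le h2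
  rw [key s₂ (h1.trans (hs1z.trans hzs2)) h2 (hzs2.ne),
      key s₁ h1 ((hs1z.trans hzs2).trans h2) (hs1z.ne')] at indep
  have i2 : (∮ w in C(0,s₂), (w - z)⁻¹) = 2*π*Complex.I := by
    apply circleIntegral.integral_sub_inv_of_mem_ball
    rw [mem_ball_zero_iff]
    exact hzs2
  have i1 : (∮ w in C(0,s₁), (w - z)⁻¹) = 0 := by
    apply Complex.circleIntegral_eq_zero_of_differentiable_on_off_countable h01.le
      countable_empty
    · apply ContinuousOn.inv₀ (by fun_prop)
      intro w hw
      rw [mem_closedBall_zero_iff] at hw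
      exact sub_ne_zero.2 (fun hc => by rw [hc] at hw; exact absurd hw (not_le.2 hs1z))
    · intro w hw
      rw [mem_diff, mem_ball_zero_iff] at hw
      have hwz : w ≠ z := fun hc => by rw [hc] at hw; exact absurd hw.1 (not_lt.2 hs1z.le)
      exact DifferentiableAt.inv (by fun_prop) (sub_ne_zero.2 hwz)
  rw [i2, i1] at indep
  simpa using indep


lemma pow_eq_exp (a : ℝ) (ha : 0 < a) (n : ℕ) : a ^ n = Real.exp ((n:ℝ) * Real.log a) := by
  rw [← Real.rpow_natCast a n, Real.rpow_def_of_pos ha, mul_comm]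

/-- `a^⌈log ε / log a⌉ ≤ ε` for `0 < a < 1`, `0 < ε < 1`. -/
lemma pow_ceil_le {a ε : ℝ} (ha0 : 0 < a) (ha1 : a < 1) (hε : 0 < ε) (hε1 : ε < 1) :
    a ^ (⌈Real.log ε / Real.log a⌉₊ : ℕ) ≤ ε := by
  have hla : Real.log a < 0 := Real.log_neg ha0 ha1
  have hlε : Real.log ε < 0 := Real.log_neg hε hε1
  have hlane : Real.log a ≠ 0 := ne_of_lt hla
  set N := ⌈Real.log ε / Real.log a⌉₊ with hNdef
  have hN : Real.log ε / Real.log a ≤ (N : ℝ) := Nat.le_ceil _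
  rw [pow_eq_exp a ha0, ← Real.exp_log hε]
  apply Real.exp_le_exp.2
  have h1 : (N : ℝ) * Real.log a
      ≤ (Real.log ε / Real.log a) * Real.log a := mul_le_mul_of_nonpos_right hN hla.le
  refine h1.trans_eq ?_
  field_simp

/-- Case `r < |z|`: `t^N ≤ ε^γ`. -/
lemma exp2 {t r ε : ℝ} (ht0 : 0 < t) (ht1 : t < 1) (hr0 : 0 < r) (hr1 : r < 1)
    (hε : 0 < ε) (hε1 : ε < 1) :
    t ^ (⌈Real.log ε / Real.log r⌉₊ : ℕ) ≤ ε ^ (Real.log t / Real.log r) := by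
  have hlr : Real.log r < 0 := Real.log_neg hr0 hr1
  have hlt : Real.log t < 0 := Real.log_neg ht0 ht1
  have hlε : Real.log ε < 0 := Real.log_neg hε hε1
  have hlrne : Real.log r ≠ 0 := ne_of_lt hlr
  set N := ⌈Real.log ε / Real.log r⌉₊ with hNdef
  have hN : Real.log ε / Real.log r ≤ (N : ℝ) := Nat.le_ceil _
  rw [pow_eq_exp t ht0, Real.rpow_def_of_pos hε]
  apply Real.exp_le_exp.2
  have h1 : (N : ℝ) * Real.log t
      ≤ (Real.log ε / Real.log r) * Real.log t := mul_le_mul_of_nonpos_right hN hlt.le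
  refine h1.trans_eq ?_
  field_simp

/-- Case `r < |z|`: `ε·(t/r)^N ≤ (t/r)·ε^γ`. -/
lemma exp1 {t r ε : ℝ} (hr0 : 0 < r) (hrt : r < t) (ht1 : t < 1)
    (hε : 0 < ε) (hε1 : ε < 1) :
    ε * (t/r) ^ (⌈Real.log ε / Real.log r⌉₊ : ℕ)
      ≤ (t/r) * ε ^ (Real.log t / Real.log r) := by
  have ht0 : 0 < t := hr0.trans hrt
  have hlr : Real.log r < 0 := Real.log_neg hr0 (hrt.trans ht1)
  have hlε : Real.log ε < 0 := Real.log_neg hε hε1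
  have hu : 0 ≤ Real.log ε / Real.log r := le_of_lt (div_pos_of_neg_of_neg hlε hlr)
  have hlrne : Real.log r ≠ 0 := ne_of_lt hlr
  set N := ⌈Real.log ε / Real.log r⌉₊ with hNdef
  have hN : (N : ℝ) ≤ Real.log ε / Real.log r + 1 :=
    (Nat.ceil_lt_add_one hu).le
  have htr1 : (0:ℝ) < t/r := by positivity
  have hlog_tr : 0 < Real.log (t/r) - 0 := by
    rw [sub_zero]
    exact Real.log_pos ((one_lt_div hr0).2 hrt)
  rw [sub_zero] at hlog_tr
  have hLHS : ε * (t/r)^(N:ℕ) = Real.exp (Real.log ε + (N:ℝ) * Real.log (t/r)) := by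
    rw [Real.exp_add, Real.exp_log hε, ← pow_eq_exp _ htr1]
  have hRHS : (t/r) * ε ^ (Real.log t / Real.log r)
      = Real.exp (Real.log (t/r) + Real.log ε * (Real.log t / Real.log r)) := by
    rw [Real.exp_add, Real.exp_log htr1, Real.rpow_def_of_pos hε]
  rw [hLHS, hRHS]
  apply Real.exp_le_exp.2
  have h1 : (N : ℝ) * Real.log (t/r)
      ≤ (Real.log ε / Real.log r + 1) * Real.log (t/r) :=
    mul_le_mul_of_nonneg_right hN hlog_tr.le
  have h2 : Real.log ε + (Real.log ε / Real.log r + 1) * Real.log (t/r)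
      = Real.log (t/r) + Real.log ε * (Real.log t / Real.log r) := by
    rw [Real.log_div ht0.ne' hr0.ne']
    field_simp
    ring
  linarith

/-- Case `|z| < r`: `ε·(r/t)^M ≤ (r/t)·ε^γ`. -/
lemma exp5 {ρ t r ε : ℝ} (hρ0 : 0 < ρ) (hρt : ρ < t) (htr : t < r) (hr1 : r < 1)
    (hε : 0 < ε) (hε1 : ε < 1) :
    ε * (r/t) ^ (⌈Real.log ε / Real.log (ρ/r)⌉₊ : ℕ)
      ≤ (r/t) * ε ^ (Real.log (t/ρ) / Real.log (r/ρ)) := by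
  have ht0 : 0 < t := hρ0.trans hρt
  have hr0 : 0 < r := ht0.trans htr
  have hab : Real.log ρ < Real.log t := Real.log_lt_log hρ0 hρt
  have hbc : Real.log t < Real.log r := Real.log_lt_log ht0 htr
  have hE : Real.log ε < 0 := Real.log_neg hε hε1
  have hac : Real.log ρ - Real.log r ≠ 0 := by linarith
  have hca : Real.log r - Real.log ρ ≠ 0 := by intro h; apply hac; linarith
  have e1 : Real.log (ρ/r) = Real.log ρ - Real.log r := Real.log_div hρ0.ne' hr0.ne'
  have e2 : Real.log (r/t) = Real.log r - Real.log t := Real.log_div hr0.ne' ht0.ne'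
  have e3 : Real.log (t/ρ) = Real.log t - Real.log ρ := Real.log_div ht0.ne' hρ0.ne'
  have e4 : Real.log (r/ρ) = Real.log r - Real.log ρ := Real.log_div hr0.ne' hρ0.ne'
  have hu : 0 ≤ Real.log ε / Real.log (ρ/r) := by
    rw [e1]
    exact le_of_lt (div_pos_of_neg_of_neg hE (by linarith))
  set M := ⌈Real.log ε / Real.log (ρ/r)⌉₊ with hMdef
  have hM : (M : ℝ) ≤ Real.log ε / Real.log (ρ/r) + 1 := (Nat.ceil_lt_add_one hu).le
  rw [e1] at hM
  have hrt1 : (0:ℝ) < r/t := by positivity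
  have hLHS : ε * (r/t)^(M:ℕ) = Real.exp (Real.log ε + (M:ℝ) * Real.log (r/t)) := by
    rw [Real.exp_add, Real.exp_log hε, ← pow_eq_exp _ hrt1]
  have hRHS : (r/t) * ε ^ (Real.log (t/ρ) / Real.log (r/ρ))
      = Real.exp (Real.log (r/t) + Real.log ε * (Real.log (t/ρ) / Real.log (r/ρ))) := by
    rw [Real.exp_add, Real.exp_log hrt1, Real.rpow_def_of_pos hε]
  rw [hLHS, hRHS]
  apply Real.exp_le_exp.2
  rw [e2, e3, e4]
  have hpos : 0 ≤ Real.log r - Real.log t := by linarith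
  have h1 : (M:ℝ) * (Real.log r - Real.log t)
      ≤ (Real.log ε / (Real.log ρ - Real.log r) + 1) * (Real.log r - Real.log t) :=
    mul_le_mul_of_nonneg_right hM hpos
  have h2 : Real.log ε + (Real.log ε / (Real.log ρ - Real.log r) + 1) * (Real.log r - Real.log t)
      = (Real.log r - Real.log t)
        + Real.log ε * ((Real.log t - Real.log ρ) / (Real.log r - Real.log ρ)) := by
    field_simp
    ring
  linarith

/-- Case `|z| < r`: `(ρ/t)^M ≤ ε^γ`. -/
lemma exp6 {ρ t r ε : ℝ} (hρ0 : 0 < ρ) (hρt : ρ < t) (htr : t < r) (hr1 : r < 1)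
    (hε : 0 < ε) (hε1 : ε < 1) :
    (ρ/t) ^ (⌈Real.log ε / Real.log (ρ/r)⌉₊ : ℕ)
      ≤ ε ^ (Real.log (t/ρ) / Real.log (r/ρ)) := by
  have ht0 : 0 < t := hρ0.trans hρt
  have hr0 : 0 < r := ht0.trans htr
  have hab : Real.log ρ < Real.log t := Real.log_lt_log hρ0 hρt
  have hbc : Real.log t < Real.log r := Real.log_lt_log ht0 htr
  have hE : Real.log ε < 0 := Real.log_neg hε hε1
  have hac : Real.log ρ - Real.log r ≠ 0 := by linarith
  have hca : Real.log r - Real.log ρ ≠ 0 := by intro h; apply hac; linarith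
  have e1 : Real.log (ρ/r) = Real.log ρ - Real.log r := Real.log_div hρ0.ne' hr0.ne'
  have e2 : Real.log (ρ/t) = Real.log ρ - Real.log t := Real.log_div hρ0.ne' ht0.ne'
  have e3 : Real.log (t/ρ) = Real.log t - Real.log ρ := Real.log_div ht0.ne' hρ0.ne'
  have e4 : Real.log (r/ρ) = Real.log r - Real.log ρ := Real.log_div hr0.ne' hρ0.ne'
  have hu : 0 ≤ Real.log ε / Real.log (ρ/r) := by
    rw [e1]
    exact le_of_lt (div_pos_of_neg_of_neg hE (by linarith))
  set M := ⌈Real.log ε / Real.log (ρ/r)⌉₊ with hMdef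
  have hM : Real.log ε / Real.log (ρ/r) ≤ (M:ℝ) := Nat.le_ceil _
  rw [e1] at hM
  have hρt1 : (0:ℝ) < ρ/t := by positivity
  rw [pow_eq_exp _ hρt1, Real.rpow_def_of_pos hε]
  apply Real.exp_le_exp.2
  rw [e2, e3, e4]
  have hneg : Real.log ρ - Real.log t ≤ 0 := by linarith
  have h1 : (M:ℝ) * (Real.log ρ - Real.log t)
      ≤ (Real.log ε / (Real.log ρ - Real.log r)) * (Real.log ρ - Real.log t) :=
    mul_le_mul_of_nonpos_right hM hneg
  have h2 : (Real.log ε / (Real.log ρ - Real.log r)) * (Real.log ρ - Real.log t)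
      = Real.log ε * ((Real.log t - Real.log ρ) / (Real.log r - Real.log ρ)) := by
    field_simp
    ring
  linarith

lemma geom_gt {x : ℝ} (hx : 1 < x) (N : ℕ) :
    ∑ n ∈ Finset.range N, x^n ≤ x^N/(x-1) := by
  rw [geom_sum_eq hx.ne' N]
  have hx1 : 0 < x - 1 := sub_pos.2 hx
  exact (div_le_div_iff_of_pos_right hx1).2 (by linarith)

lemma geom_lt' {x : ℝ} (hx0 : 0 ≤ x) (hx : x < 1) (N : ℕ) :
    ∑ n ∈ Finset.range N, x^n ≤ 1/(1-x) := by
  rw [geom_sum_eq hx.ne N]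
  have h1 : 0 < 1 - x := sub_pos.2 hx
  have e : (x^N - 1)/(x-1) = (1 - x^N)/(1-x) := by
    rw [← neg_div_neg_eq]
    congr 1 <;> ring
  rw [e]
  exact (div_le_div_iff_of_pos_right h1).2 (by nlinarith [pow_nonneg hx0 N])

lemma master (ρ r : ℝ) (hρ : 0 < ρ) (hρr : ρ < r) (hr : r < 1)
    (z : ℂ) (hz : ρ < ‖z‖) (hz1 : ‖z‖ < 1)
    (f : ℂ → ℂ) (hf : DifferentiableOn ℂ f {w : ℂ | ρ < ‖w‖ ∧ ‖w‖ < 1})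
    (ε : ℝ) (hε : 0 < ε)
    (hH2 : ∀ s : ℝ, ρ < s → s < 1 → (∫ θ in (0:ℝ)..(2*π), ‖f (circleMap 0 s θ)‖^2 * s) ≤ 1)
    (hΓ : (∫ θ in (0:ℝ)..(2*π), ‖f (circleMap 0 r θ)‖^2 * r) ≤ ε^2)
    (N M : ℕ) :
    2*π*‖f z‖ ≤ (Real.sqrt (2*π/ρ) * ε) * (∑ n ∈ Finset.range N, ((‖z‖)/r)^n)
      + (Real.sqrt (2*π/ρ) * ε / (‖z‖)) * (∑ m ∈ Finset.range M, (r/(‖z‖))^m)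
      + Real.sqrt (2*π) * (‖z‖)^N / (1 - ‖z‖)
      + Real.sqrt (2*π) * (ρ/(‖z‖))^M / ((‖z‖) - ρ) := by
  set U := {w : ℂ | ρ < ‖w‖ ∧ ‖w‖ < 1} with hU
  set t := ‖z‖ with ht
  set K := Real.sqrt (2*π/ρ) with hK
  set L := Real.sqrt (2*π) with hL
  have ht0 : 0 < t := hρ.trans hz
  have hr0 : 0 < r := hρ.trans hρr
  have hz0 : z ≠ 0 := by
    intro h0; apply ht0.ne'; rw [ht, h0, norm_zero]
  have hKpos : 0 < K := Real.sqrt_pos.2 (by positivity)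
  have hLpos : 0 < L := Real.sqrt_pos.2 (by positivity)
  have hLK : L ≤ K := by
    apply Real.sqrt_le_sqrt
    rw [le_div_iff₀ hρ]
    nlinarith [Real.pi_pos]
  -- continuity of f on spheres
  have sphere_sub : ∀ {s : ℝ}, ρ < s → s < 1 → sphere (0:ℂ) s ⊆ U := by
    intro s hs1 hs2 w hw
    rw [mem_sphere_zero_iff_norm] at hw
    exact ⟨hw ▸ hs1, hw ▸ hs2⟩
  have hfc : ∀ {s : ℝ}, ρ < s → s < 1 → ContinuousOn f (sphere (0:ℂ) s) := by
    intro s hs1 hs2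
    exact hf.continuousOn.mono (sphere_sub hs1 hs2)
  have hsphere_ne : ∀ {s : ℝ}, 0 < s → ∀ w ∈ sphere (0:ℂ) s, w ≠ 0 := by
    intro s hs w hw h0
    rw [mem_sphere_zero_iff_norm, h0] at hw
    simp at hw
    exact hs.ne' hw.symm
  have hsphere_norm : ∀ {s : ℝ}, ∀ w ∈ sphere (0:ℂ) s, ‖w‖ = s := by
    intro s w hw; rwa [mem_sphere_zero_iff_norm] at hw
  -- the coefficient functions
  set g : ℕ → ℂ → ℂ := fun n w => (w^(n+1))⁻¹ * f w with hgdef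
  set h : ℕ → ℂ → ℂ := fun m w => w^m * f w with hhdef
  have hgc : ∀ (n : ℕ) {s : ℝ}, ρ < s → s < 1 → ContinuousOn (g n) (sphere (0:ℂ) s) := by
    intro n s hs1 hs2
    exact (((continuousOn_pow _).inv₀ (fun w hw => pow_ne_zero _
      (hsphere_ne (hρ.trans hs1) w hw))).mul (hfc hs1 hs2))
  have hhc : ∀ (m : ℕ) {s : ℝ}, ρ < s → s < 1 → ContinuousOn (h m) (sphere (0:ℂ) s) := by
    intro m s hs1 hs2
    exact (continuousOn_pow _).mul (hfc hs1 hs2)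
  have hUne : ∀ w ∈ U, w ≠ 0 := by
    intro w hw h0
    subst h0
    have : ρ < 0 := by simpa using hw.1
    linarith
  have hgdiff : ∀ n : ℕ, DifferentiableOn ℂ (g n) U := by
    intro n
    apply DifferentiableOn.mul _ hf
    exact DifferentiableOn.inv ((differentiable_pow (n+1)).differentiableOn)
      (fun w hw => pow_ne_zero _ (hUne w hw))
  have hhdiff : ∀ m : ℕ, DifferentiableOn ℂ (h m) U := by
    intro m
    exact ((differentiable_pow m).differentiableOn).mul hf
  set A : ℕ → ℂ := fun n => ∮ w in C(0,r), g n w with hAdef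
  set B : ℕ → ℂ := fun m => ∮ w in C(0,r), h m w with hBdef
  -- coefficient bounds
  have hsqrt_eps : Real.sqrt (ε^2) = ε := Real.sqrt_sq hε.le
  have hsqrtr : Real.sqrt (2*π*r) ≤ K * r := by
    have : K * r = Real.sqrt (2*π/ρ * r^2) := by
      rw [Real.sqrt_mul (by positivity), Real.sqrt_sq hr0.le]
    rw [this]
    apply Real.sqrt_le_sqrt
    rw [div_mul_eq_mul_div, le_div_iff₀ hρ]
    nlinarith [mul_nonneg (mul_nonneg (by positivity : (0:ℝ) ≤ 2*π) hr0.le) (sub_pos.2 hρr).le]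
  have hA : ∀ n : ℕ, ‖A n‖ ≤ K * ε / r^n := by
    intro n
    have hb := circle_bound f (g n) r ((r^(n+1))⁻¹) (ε^2) hr0 (by positivity) (by positivity)
      (hfc hρr hr) (hgc n hρr hr) ?_ hΓ
    · refine hb.trans ?_
      rw [hsqrt_eps]
      have h1 : (r^(n+1))⁻¹ * Real.sqrt (2*π*r) ≤ (r^(n+1))⁻¹ * (K * r) :=
        mul_le_mul_of_nonneg_left hsqrtr (by positivity)
      calc (r^(n+1))⁻¹ * Real.sqrt (2*π*r) * ε ≤ (r^(n+1))⁻¹ * (K*r) * ε :=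
            mul_le_mul_of_nonneg_right h1 hε.le
      _ = K * ε / r^n := by field_simp; ring
    · intro w hw
      have : ‖g n w‖ = (r^(n+1))⁻¹ * ‖f w‖ := by
        rw [hgdef]
        simp only [norm_mul, norm_inv, norm_pow, hsphere_norm w hw]
      exact this.le
  have hB : ∀ m : ℕ, ‖B m‖ ≤ K * ε * r^m := by
    intro m
    have hb := circle_bound f (h m) r (r^m) (ε^2) hr0 (by positivity) (by positivity)
      (hfc hρr hr) (hhc m hρr hr) ?_ hΓ
    · refine hb.trans ?_
      rw [hsqrt_eps]
      have hs2 : Real.sqrt (2*π*r) ≤ K := by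
        refine le_trans ?_ hLK
        apply Real.sqrt_le_sqrt
        nlinarith [Real.pi_pos]
      calc r^m * Real.sqrt (2*π*r) * ε ≤ r^m * K * ε := by
            apply mul_le_mul_of_nonneg_right (mul_le_mul_of_nonneg_left hs2 (by positivity)) hε.le
      _ = K * ε * r^m := by ring
    · intro w hw
      have : ‖h m w‖ = r^m * ‖f w‖ := by
        rw [hhdef]
        simp only [norm_mul, norm_pow, hsphere_norm w hw]
      exact this.le
  -- remainder bounds
  set Rp : ℝ → ℂ := fun s₂ => ∮ w in C(0,s₂), (z/w)^N * ((w - z)⁻¹ * f w) with hRpdef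
  set Rm : ℝ → ℂ := fun s₁ => ∮ w in C(0,s₁), (w/z)^M * ((w - z)⁻¹ * f w) with hRmdef
  have hinvc : ∀ {s : ℝ}, s ≠ t → 0 < s → ContinuousOn (fun w : ℂ => (w - z)⁻¹) (sphere (0:ℂ) s) := by
    intro s hst h0
    apply ContinuousOn.inv₀ (by fun_prop)
    intro w hw
    refine sub_ne_zero.2 (fun hc => hst ?_)
    rw [← hsphere_norm w hw, hc, ← ht]
  have hwz_ne : ∀ {s : ℝ}, s ≠ t → ∀ w ∈ sphere (0:ℂ) s, w ≠ z := by
    intro s hst w hw hc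
    apply hst
    rw [← hsphere_norm w hw, hc, ← ht]
  have hRpb : ∀ s₂ : ℝ, t < s₂ → s₂ < 1 → ‖Rp s₂‖ ≤ L * (t/s₂)^N / (s₂ - t) := by
    intro s₂ h1 h2
    have h0 : 0 < s₂ := ht0.trans h1
    have hρs : ρ < s₂ := hz.trans h1
    have hsub : 0 < s₂ - t := sub_pos.2 h1
    have hgc2 : ContinuousOn (fun w : ℂ => (z/w)^N * ((w - z)⁻¹ * f w)) (sphere (0:ℂ) s₂) := by
      apply ContinuousOn.mul _ ((hinvc h1.ne' h0).mul (hfc hρs h2))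
      exact ((continuousOn_const.div continuousOn_id
        (fun w hw => hsphere_ne h0 w hw)).pow N)
    have hpt : ∀ w ∈ sphere (0:ℂ) s₂, ‖(z/w)^N * ((w - z)⁻¹ * f w)‖
        ≤ ((t/s₂)^N * (s₂-t)⁻¹) * ‖f w‖ := by
      intro w hw
      have hnw : ‖w‖ = s₂ := hsphere_norm w hw
      have hd : s₂ - t ≤ ‖w - z‖ := by
        have := norm_sub_norm_le w z
        rw [hnw, ← ht] at this
        linarith
      rw [norm_mul, norm_mul, norm_pow, norm_div, norm_inv, hnw, ← ht]
      have h5 : ‖w - z‖⁻¹ ≤ (s₂ - t)⁻¹ := inv_anti₀ hsub hd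
      have h6 : ‖w - z‖⁻¹ * ‖f w‖ ≤ (s₂-t)⁻¹ * ‖f w‖ :=
        mul_le_mul_of_nonneg_right h5 (norm_nonneg _)
      calc (t/s₂)^N * (‖w - z‖⁻¹ * ‖f w‖) ≤ (t/s₂)^N * ((s₂-t)⁻¹ * ‖f w‖) :=
            mul_le_mul_of_nonneg_left h6 (by positivity)
      _ = ((t/s₂)^N * (s₂-t)⁻¹) * ‖f w‖ := by ring
    have hb := circle_bound f _ s₂ ((t/s₂)^N * (s₂-t)⁻¹) 1 h0 (by positivity) zero_le_one
      (hfc hρs h2) hgc2 hpt (hH2 s₂ hρs h2)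
    refine hb.trans ?_
    rw [Real.sqrt_one, mul_one]
    have h7 : Real.sqrt (2*π*s₂) ≤ L := by
      apply Real.sqrt_le_sqrt
      nlinarith [Real.pi_pos]
    calc (t/s₂)^N * (s₂-t)⁻¹ * Real.sqrt (2*π*s₂) ≤ (t/s₂)^N * (s₂-t)⁻¹ * L := by
          apply mul_le_mul_of_nonneg_left h7 (by positivity)
    _ = L * (t/s₂)^N / (s₂ - t) := by ring
  have hRmb : ∀ s₁ : ℝ, ρ < s₁ → s₁ < t → ‖Rm s₁‖ ≤ L * (s₁/t)^M / (t - s₁) := by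
    intro s₁ h1 h2
    have h0 : 0 < s₁ := hρ.trans h1
    have h2' : s₁ < 1 := h2.trans hz1
    have hsub : 0 < t - s₁ := sub_pos.2 h2
    have hgc2 : ContinuousOn (fun w : ℂ => (w/z)^M * ((w - z)⁻¹ * f w)) (sphere (0:ℂ) s₁) := by
      apply ContinuousOn.mul _ ((hinvc h2.ne h0).mul (hfc h1 h2'))
      exact ((continuousOn_id.div continuousOn_const (fun w _ => hz0)).pow M)
    have hpt : ∀ w ∈ sphere (0:ℂ) s₁, ‖(w/z)^M * ((w - z)⁻¹ * f w)‖
        ≤ ((s₁/t)^M * (t-s₁)⁻¹) * ‖f w‖ := by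
      intro w hw
      have hnw : ‖w‖ = s₁ := hsphere_norm w hw
      have hd : t - s₁ ≤ ‖w - z‖ := by
        have := norm_sub_norm_le z w
        rw [hnw, ← ht, norm_sub_rev] at this
        linarith
      rw [norm_mul, norm_mul, norm_pow, norm_div, norm_inv, hnw, ← ht]
      have h5 : ‖w - z‖⁻¹ ≤ (t - s₁)⁻¹ := inv_anti₀ hsub hd
      have h6 : ‖w - z‖⁻¹ * ‖f w‖ ≤ (t-s₁)⁻¹ * ‖f w‖ :=
        mul_le_mul_of_nonneg_right h5 (norm_nonneg _)
      calc (s₁/t)^M * (‖w - z‖⁻¹ * ‖f w‖) ≤ (s₁/t)^M * ((t-s₁)⁻¹ * ‖f w‖) :=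
            mul_le_mul_of_nonneg_left h6 (by positivity)
      _ = ((s₁/t)^M * (t-s₁)⁻¹) * ‖f w‖ := by ring
    have hb := circle_bound f _ s₁ ((s₁/t)^M * (t-s₁)⁻¹) 1 h0 (by positivity) zero_le_one
      (hfc h1 h2') hgc2 hpt (hH2 s₁ h1 h2')
    refine hb.trans ?_
    rw [Real.sqrt_one, mul_one]
    have h7 : Real.sqrt (2*π*s₁) ≤ L := by
      apply Real.sqrt_le_sqrt
      nlinarith [Real.pi_pos]
    calc (s₁/t)^M * (t-s₁)⁻¹ * Real.sqrt (2*π*s₁) ≤ (s₁/t)^M * (t-s₁)⁻¹ * L := by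
          apply mul_le_mul_of_nonneg_left h7 (by positivity)
    _ = L * (s₁/t)^M / (t - s₁) := by ring
  -- expansion identities
  have hexpP : ∀ s₂ : ℝ, t < s₂ → s₂ < 1 →
      (∮ w in C(0,s₂), (w - z)⁻¹ * f w) = (∑ n ∈ Finset.range N, z^n * A n) + Rp s₂ := by
    intro s₂ h1 h2
    have h0 : 0 < s₂ := ht0.trans h1
    have hρs : ρ < s₂ := hz.trans h1
    have hAind : ∀ n : ℕ, (∮ w in C(0,s₂), g n w) = A n := by
      intro n
      rcases le_total r s₂ with hc | hc
      · exact annulus_indep ρ hρ (g n) (hgdiff n) hρr hc h2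
      · exact (annulus_indep ρ hρ (g n) (hgdiff n) hρs hc hr).symm
    have heq : Set.EqOn (fun w : ℂ => (w - z)⁻¹ * f w)
        (fun w : ℂ => (∑ n ∈ Finset.range N, z^n * g n w) + (z/w)^N * ((w - z)⁻¹ * f w))
        (sphere (0:ℂ) s₂) := by
      intro w hw
      have hw0 : w ≠ 0 := hsphere_ne h0 w hw
      have hwz : w ≠ z := hwz_ne h1.ne' w hw
      simp only
      conv_lhs => rw [kernel_outer N z w hw0 hwz]
      rw [add_mul, Finset.sum_mul]
      congr 1
      · exact Finset.sum_congr rfl (fun n _ => by rw [hgdef]; ring)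
      · ring
    have hint1 : CircleIntegrable (fun w : ℂ => ∑ n ∈ Finset.range N, z^n * g n w) 0 s₂ :=
      (continuousOn_finset_sum _ (fun n _ => continuousOn_const.mul (hgc n hρs h2))).circleIntegrable h0.le
    have hint2 : CircleIntegrable (fun w : ℂ => (z/w)^N * ((w - z)⁻¹ * f w)) 0 s₂ := by
      apply ContinuousOn.circleIntegrable h0.le
      apply ContinuousOn.mul _ ((hinvc h1.ne' h0).mul (hfc hρs h2))
      exact ((continuousOn_const.div continuousOn_id (fun w hw => hsphere_ne h0 w hw)).pow N)
    rw [circleIntegral.integral_congr h0.le heq,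
        circleIntegral_add hint1 hint2]
    congr 1
    rw [circleIntegral_finset_sum _ (fun n w => z^n * g n w) _ _
      (fun n _ => (continuousOn_const.mul (hgc n hρs h2)).circleIntegrable h0.le)]
    refine Finset.sum_congr rfl (fun n _ => ?_)
    rw [circleIntegral.integral_const_mul, hAind n]
  have hexpM : ∀ s₁ : ℝ, ρ < s₁ → s₁ < t →
      (∮ w in C(0,s₁), (w - z)⁻¹ * f w)
        = -(∑ m ∈ Finset.range M, (z^(m+1))⁻¹ * B m) + Rm s₁ := by
    intro s₁ h1 h2
    have h0 : 0 < s₁ := hρ.trans h1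
    have h2' : s₁ < 1 := h2.trans hz1
    have hBind : ∀ m : ℕ, (∮ w in C(0,s₁), h m w) = B m := by
      intro m
      rcases le_total r s₁ with hc | hc
      · exact annulus_indep ρ hρ (h m) (hhdiff m) hρr hc h2'
      · exact (annulus_indep ρ hρ (h m) (hhdiff m) h1 hc hr).symm
    have heq : Set.EqOn (fun w : ℂ => (w - z)⁻¹ * f w)
        (fun w : ℂ => (∑ m ∈ Finset.range M, (-(z^(m+1))⁻¹) * h m w)
          + (w/z)^M * ((w - z)⁻¹ * f w))
        (sphere (0:ℂ) s₁) := by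
      intro w hw
      have hwz : w ≠ z := hwz_ne h2.ne w hw
      simp only
      conv_lhs => rw [kernel_inner M z w hz0 hwz]
      rw [add_mul, neg_mul, Finset.sum_mul]
      congr 1
      · rw [← Finset.sum_neg_distrib]
        exact Finset.sum_congr rfl (fun m _ => by rw [hhdef]; ring)
      · ring
    have hint1 : CircleIntegrable (fun w : ℂ => ∑ m ∈ Finset.range M, (-(z^(m+1))⁻¹) * h m w) 0 s₁ :=
      (continuousOn_finset_sum _ (fun m _ => continuousOn_const.mul (hhc m h1 h2'))).circleIntegrable h0.le
    have hint2 : CircleIntegrable (fun w : ℂ => (w/z)^M * ((w - z)⁻¹ * f w)) 0 s₁ := by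
      apply ContinuousOn.circleIntegrable h0.le
      apply ContinuousOn.mul _ ((hinvc h2.ne h0).mul (hfc h1 h2'))
      exact ((continuousOn_id.div continuousOn_const (fun w _ => hz0)).pow M)
    rw [circleIntegral.integral_congr h0.le heq,
        circleIntegral_add hint1 hint2]
    congr 1
    rw [circleIntegral_finset_sum _ (fun m w => (-(z^(m+1))⁻¹) * h m w) _ _
      (fun m _ => (continuousOn_const.mul (hhc m h1 h2')).circleIntegrable h0.le)]
    rw [← Finset.sum_neg_distrib]
    refine Finset.sum_congr rfl (fun m _ => ?_)
    rw [circleIntegral.integral_const_mul, hBind m, neg_mul]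
  -- key inequality
  set S := ∑ n ∈ Finset.range N, z^n * A n with hSdef
  set T := ∑ m ∈ Finset.range M, (z^(m+1))⁻¹ * B m with hTdef
  have hkey : ∀ s₁ s₂ : ℝ, ρ < s₁ → s₁ < t → t < s₂ → s₂ < 1 →
      ‖(2*π*Complex.I) * f z - S - T‖ ≤ L*(t/s₂)^N/(s₂-t) + L*(s₁/t)^M/(t-s₁) := by
    intro s₁ s₂ h1 h2 h3 h4
    have hc := annulus_cauchy ρ hρ f hf z h1 h2 h3 h4
    rw [hexpP s₂ h3 h4, hexpM s₁ h1 h2] at hc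
    have hdiff : (2*π*Complex.I) * f z - S - T = Rp s₂ - Rm s₁ := by
      rw [hSdef, hTdef]; linear_combination -hc
    rw [hdiff]
    exact (norm_sub_le _ _).trans (add_le_add (hRpb s₂ h3 h4) (hRmb s₁ h1 h2))
  -- limits
  have hlim1 : ∀ s₁ : ℝ, ρ < s₁ → s₁ < t →
      ‖(2*π*Complex.I) * f z - S - T‖ ≤ L*t^N/(1-t) + L*(s₁/t)^M/(t-s₁) := by
    intro s₁ h1 h2
    have hc1 : ContinuousAt (fun s₂ : ℝ => L*(t/s₂)^N/(s₂-t) + L*(s₁/t)^M/(t-s₁)) 1 := by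
      apply ContinuousAt.add _ continuousAt_const
      apply ContinuousAt.div
      · exact continuousAt_const.mul ((continuousAt_const.div continuousAt_id one_ne_zero).pow N)
      · exact continuousAt_id.sub continuousAt_const
      · simpa using sub_ne_zero.2 hz1.ne'
    have htend : Filter.Tendsto (fun s₂ : ℝ => L*(t/s₂)^N/(s₂-t) + L*(s₁/t)^M/(t-s₁))
        (nhdsWithin 1 (Set.Iio 1)) (nhds (L*t^N/(1-t) + L*(s₁/t)^M/(t-s₁))) := by
      have := hc1.tendsto.mono_left (nhdsWithin_le_nhds (s := Set.Iio (1:ℝ)))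
      simpa using this
    apply ge_of_tendsto htend
    filter_upwards [Ioo_mem_nhdsLT_of_mem (⟨hz1, le_refl (1:ℝ)⟩ : (1:ℝ) ∈ Set.Ioc t 1)]
      with s₂ hs₂
    exact hkey s₁ s₂ h1 h2 hs₂.1 hs₂.2
  have hlim2 : ‖(2*π*Complex.I) * f z - S - T‖ ≤ L*t^N/(1-t) + L*(ρ/t)^M/(t-ρ) := by
    have hc1 : ContinuousAt (fun s₁ : ℝ => L*t^N/(1-t) + L*(s₁/t)^M/(t-s₁)) ρ := by
      apply ContinuousAt.add continuousAt_const
      apply ContinuousAt.div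
      · exact continuousAt_const.mul ((continuousAt_id.div continuousAt_const ht0.ne').pow M)
      · exact continuousAt_const.sub continuousAt_id
      · simpa using sub_ne_zero.2 hz.ne'
    have htend : Filter.Tendsto (fun s₁ : ℝ => L*t^N/(1-t) + L*(s₁/t)^M/(t-s₁))
        (nhdsWithin ρ (Set.Ioi ρ)) (nhds (L*t^N/(1-t) + L*(ρ/t)^M/(t-ρ))) := by
      have := hc1.tendsto.mono_left (nhdsWithin_le_nhds (s := Set.Ioi ρ))
      simpa using this
    apply ge_of_tendsto htend
    filter_upwards [Ioo_mem_nhdsGT_of_mem (⟨le_refl ρ, hz⟩ : ρ ∈ Set.Ico ρ t)]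
      with s₁ hs₁
    exact hlim1 s₁ hs₁.1 hs₁.2
  -- assembly
  have hnorm2pi : ‖(2*(π:ℂ)*Complex.I : ℂ)‖ = 2*π := by
    simp [norm_mul, Complex.norm_I, Complex.norm_real,
      abs_of_pos Real.pi_pos]
  have hS : ‖S‖ ≤ (K * ε) * (∑ n ∈ Finset.range N, (t/r)^n) := by
    rw [Finset.mul_sum]
    refine (norm_sum_le _ _).trans (Finset.sum_le_sum (fun n _ => ?_))
    rw [norm_mul, norm_pow, ← ht]
    calc t^n * ‖A n‖ ≤ t^n * (K * ε / r^n) :=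
          mul_le_mul_of_nonneg_left (hA n) (by positivity)
    _ = K * ε * (t/r)^n := by rw [div_pow]; ring
  have hT : ‖T‖ ≤ (K * ε / t) * (∑ m ∈ Finset.range M, (r/t)^m) := by
    rw [Finset.mul_sum]
    refine (norm_sum_le _ _).trans (Finset.sum_le_sum (fun m _ => ?_))
    rw [norm_mul, norm_inv, norm_pow, ← ht]
    calc (t^(m+1))⁻¹ * ‖B m‖ ≤ (t^(m+1))⁻¹ * (K * ε * r^m) :=
          mul_le_mul_of_nonneg_left (hB m) (by positivity)
    _ = K * ε / t * (r/t)^m := by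
        rw [div_pow]
        field_simp
        ring
  calc 2*π*‖f z‖ = ‖(2*(π:ℂ)*Complex.I) * f z‖ := by rw [norm_mul, hnorm2pi]
  _ = ‖((2*(π:ℂ)*Complex.I) * f z - S - T) + S + T‖ := by ring_nf
  _ ≤ ‖(2*(π:ℂ)*Complex.I) * f z - S - T‖ + ‖S‖ + ‖T‖ :=
      (norm_add_le _ _).trans (add_le_add (norm_add_le _ _) le_rfl)
  _ ≤ (L*t^N/(1-t) + L*(ρ/t)^M/(t-ρ)) + (K * ε) * (∑ n ∈ Finset.range N, (t/r)^n)
      + (K * ε / t) * (∑ m ∈ Finset.range M, (r/t)^m) :=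
      add_le_add (add_le_add hlim2 hS) hT
  _ = (K * ε) * (∑ n ∈ Finset.range N, (t/r)^n)
      + (K * ε / t) * (∑ m ∈ Finset.range M, (r/t)^m)
      + L * t^N / (1 - t) + L * (ρ/t)^M / (t - ρ) := by ring

set_option maxHeartbeats 2000000 in
/-- annulus extrapolation bound: if `f` is analytic on
`A_ρ = {ρ < |ζ| < 1}` with `H²(A_ρ)` norm at most `1` (every circle `Γ_s`,
`ρ < s < 1`, carries `L²` mass at most `1`) and `‖f‖_{L²(Γ_r)} ≤ ε`, then
`|f(z)| ≤ C ε^{γ(z)}` with `C` independent of `ε` and `f`. -/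
theorem stmt12 (ρ r : ℝ) (hρ : 0 < ρ) (hρr : ρ < r) (hr : r < 1)
    (z : ℂ) (hz : ρ < ‖z‖) (hz1 : ‖z‖ < 1)
    (hzr : ‖z‖ ≠ r) :
    ∃ C : ℝ, 0 < C ∧ ∀ ε : ℝ, 0 < ε → ∀ f : ℂ → ℂ,
      DifferentiableOn ℂ f {ζ : ℂ | ρ < ‖ζ‖ ∧ ‖ζ‖ < 1} →
      (∀ s : ℝ, ρ < s → s < 1 →
        (∫ t in (0:ℝ)..(2 * Real.pi),
          ‖f ((s : ℂ) * Complex.exp (Complex.I * (t : ℂ)))‖ ^ 2 * s) ≤ 1) →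
      (∫ t in (0:ℝ)..(2 * Real.pi),
          ‖f ((r : ℂ) * Complex.exp (Complex.I * (t : ℂ)))‖ ^ 2 * r) ≤ ε ^ 2 →
      ‖f z‖ ≤ C * ε ^ gammaAnn ρ r z := by
  set t := ‖z‖ with ht
  have hr0 : 0 < r := hρ.trans hρr
  have ht0 : 0 < t := hρ.trans hz
  have h1t : 0 < 1 - t := sub_pos.2 hz1
  have htρ : 0 < t - ρ := sub_pos.2 hz
  set d := |t - r| with hd
  have hd0 : 0 < d := abs_pos.2 (sub_ne_zero.2 hzr)
  set K := Real.sqrt (2*π/ρ) with hK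
  set L := Real.sqrt (2*π) with hL
  have hK0 : 0 < K := Real.sqrt_pos.2 (by positivity)
  have hL0 : 0 < L := Real.sqrt_pos.2 (by positivity)
  set C := (K+L) * (2/(1-t) + 2/(t-ρ) + (t + 1 + r/t)/d + 2) with hCdef
  have hbig0 : 0 < 2/(1-t) + 2/(t-ρ) + (t + 1 + r/t)/d + 2 := by positivity
  have hC0 : 0 < C := mul_pos (by positivity) hbig0
  refine ⟨C, hC0, ?_⟩
  intro ε hε f hf hH2 hΓ
  have hconv : ∀ s θ : ℝ, (s:ℂ) * Complex.exp (Complex.I * (θ:ℂ)) = circleMap 0 s θ := by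
    intro s θ
    rw [circleMap_zero, mul_comm Complex.I (θ:ℂ)]
  have hH2' : ∀ s:ℝ, ρ < s → s < 1 →
      (∫ θ in (0:ℝ)..(2*π), ‖f (circleMap 0 s θ)‖^2 * s) ≤ 1 := by
    intro s h1 h2
    have h := hH2 s h1 h2
    simp only [hconv] at h
    exact h
  have hΓ' : (∫ θ in (0:ℝ)..(2*π), ‖f (circleMap 0 r θ)‖^2 * r) ≤ ε^2 := by
    have h := hΓ
    simp only [hconv] at h
    exact h
  have hM := master ρ r hρ hρr hr z hz hz1 f hf ε hε hH2' hΓ'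
  rw [← ht, ← hK, ← hL] at hM
  set γ := gammaAnn ρ r z with hγdef
  -- gamma bounds
  have hγbounds : 0 ≤ γ ∧ γ ≤ 1 := by
    rw [hγdef, gammaAnn, ← ht]
    split_ifs with hcase
    · have hlr : Real.log r < 0 := Real.log_neg hr0 hr
      have hlt : Real.log t ≤ 0 := (Real.log_neg ht0 hz1).le
      have hlle : Real.log r ≤ Real.log t := (Real.log_lt_log hr0 hcase).le
      constructor
      · rw [div_nonneg_iff]
        right
        exact ⟨hlt, hlr.le⟩
      · rw [div_le_one_iff]
        exact Or.inr (Or.inr ⟨hlr, hlle⟩)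
    · have htr : t < r := lt_of_le_of_ne (not_lt.1 hcase) hzr
      have h1 : 0 < Real.log (r/ρ) := Real.log_pos ((one_lt_div hρ).2 hρr)
      have h2 : 0 ≤ Real.log (t/ρ) := (Real.log_pos ((one_lt_div hρ).2 hz)).le
      have h3 : Real.log (t/ρ) ≤ Real.log (r/ρ) :=
        (Real.log_lt_log (by positivity) ((div_lt_div_iff_of_pos_right hρ).2 htr)).le
      constructor
      · exact div_nonneg h2 h1.le
      · rw [div_le_one h1]
        exact h3
  obtain ⟨hγ0, hγ1⟩ := hγbounds
  have hεγ0 : 0 < ε ^ γ := Real.rpow_pos_of_pos hε γ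
  have hfz21 : ‖f z‖ ≤ 2*π*‖f z‖ := by nlinarith [Real.pi_gt_three, norm_nonneg (f z)]
  rcases le_or_gt 1 ε with hε1 | hε1
  · -- ε ≥ 1 : take N = M = 0
    have hm := hM 0 0
    simp only [Finset.range_zero, Finset.sum_empty, mul_zero, pow_zero, mul_one,
      add_zero, zero_add] at hm
    have hεγ1 : 1 ≤ ε ^ γ := Real.one_le_rpow hε1 hγ0
    have hstep : L/(1-t) + L/(t-ρ) ≤ C := by
      rw [hCdef]
      have e1 : 0 < 1/(1-t) := by positivity
      have e2 : 0 < 1/(t-ρ) := by positivity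
      have e3 : 0 ≤ (t+1+r/t)/d := by positivity
      have b1 : L/(1-t) ≤ (K+L)*(2/(1-t)) := by
        rw [show L/(1-t) = L*(1/(1-t)) by ring]
        exact mul_le_mul (by linarith) ((div_le_div_iff_of_pos_right h1t).2 one_le_two)
          (by positivity) (by positivity)
      have b2 : L/(t-ρ) ≤ (K+L)*(2/(t-ρ)) := by
        rw [show L/(t-ρ) = L*(1/(t-ρ)) by ring]
        exact mul_le_mul (by linarith) ((div_le_div_iff_of_pos_right htρ).2 one_le_two)
          (by positivity) (by positivity)
      nlinarith [mul_nonneg (add_pos hK0 hL0).le e3, mul_pos (add_pos hK0 hL0) (by norm_num : (0:ℝ) < 2)]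
    calc ‖f z‖ ≤ 2*π*‖f z‖ := hfz21
    _ ≤ L/(1-t) + L/(t-ρ) := by linarith [hm]
    _ ≤ C := hstep
    _ = C * 1 := (mul_one C).symm
    _ ≤ C * ε^γ := mul_le_mul_of_nonneg_left hεγ1 hC0.le
  · -- ε < 1
    have hεle : ε ≤ ε ^ γ := by
      calc ε = ε ^ (1:ℝ) := (Real.rpow_one ε).symm
      _ ≤ ε ^ γ := Real.rpow_le_rpow_of_exponent_ge hε hε1.le hγ1
    have hKL : 0 < K + L := add_pos hK0 hL0
    rcases lt_or_gt_of_ne hzr with htr | hrt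
    · -- case t < r
      have hγeq : γ = Real.log (t/ρ) / Real.log (r/ρ) := by
        rw [hγdef, gammaAnn, ← ht, if_neg (not_lt.2 htr.le)]
      have hdeq : d = r - t := by
        rw [hd, abs_of_neg (by linarith : t - r < 0)]; ring
      have hrt0 : 0 < r - t := by linarith
      set N := ⌈Real.log ε / Real.log t⌉₊ with hNdef
      set M := ⌈Real.log ε / Real.log (ρ/r)⌉₊ with hMdef
      have hm := hM N M
      have hS1 : (∑ n ∈ Finset.range N, (t/r)^n) ≤ r/(r-t) := by
        refine (geom_lt' (by positivity) ((div_lt_one hr0).2 htr) N).trans_eq ?_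
        rw [show 1 - t/r = (r-t)/r by field_simp, one_div_div]
      have hT1 : (K*ε) * (∑ n ∈ Finset.range N, (t/r)^n) ≤ (K+L) * (r/d) * ε^γ := by
        calc (K*ε) * (∑ n ∈ Finset.range N, (t/r)^n) ≤ (K*ε) * (r/(r-t)) :=
              mul_le_mul_of_nonneg_left hS1 (by positivity)
        _ = K * (r/(r-t)) * ε := by ring
        _ ≤ K * (r/(r-t)) * ε^γ := mul_le_mul_of_nonneg_left hεle (by positivity)
        _ ≤ (K+L) * (r/d) * ε^γ := by
            rw [hdeq]
            exact mul_le_mul_of_nonneg_right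
              (mul_le_mul_of_nonneg_right (by linarith) (by positivity)) hεγ0.le
      have hx : 1 < r/t := (one_lt_div ht0).2 htr
      have hS2 : (∑ m ∈ Finset.range M, (r/t)^m) ≤ (r/t)^M/((r/t)-1) := geom_gt hx M
      have h5 : ε * (r/t)^(M:ℕ) ≤ (r/t) * ε^γ := by
        rw [hγeq]; exact exp5 hρ hz htr hr hε hε1
      have hxpos : 0 < (r/t) - 1 := by linarith
      have hT2 : (K*ε/t) * (∑ m ∈ Finset.range M, (r/t)^m) ≤ (K+L) * ((r/t)/d) * ε^γ := by
        calc (K*ε/t) * (∑ m ∈ Finset.range M, (r/t)^m) ≤ (K*ε/t) * ((r/t)^M/((r/t)-1)) :=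
              mul_le_mul_of_nonneg_left hS2 (by positivity)
        _ = (K/t) * (ε*(r/t)^M) * (1/((r/t)-1)) := by ring
        _ ≤ (K/t) * ((r/t)*ε^γ) * (1/((r/t)-1)) :=
              mul_le_mul_of_nonneg_right
                (mul_le_mul_of_nonneg_left h5 (by positivity)) (by positivity)
        _ = K * ((r/t)/(r-t)) * ε^γ := by
            rw [show (r/t)-1 = (r-t)/t by field_simp, one_div_div]
            field_simp
        _ ≤ (K+L) * ((r/t)/d) * ε^γ := by
            rw [hdeq]
            exact mul_le_mul_of_nonneg_right
              (mul_le_mul_of_nonneg_right (by linarith) (by positivity)) hεγ0.le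
      have hpc : t^(N:ℕ) ≤ ε := pow_ceil_le ht0 hz1 hε hε1
      have hT3 : L*t^N/(1-t) ≤ (K+L)*(1/(1-t))*ε^γ := by
        calc L*t^N/(1-t) ≤ L*ε^γ/(1-t) :=
              (div_le_div_iff_of_pos_right h1t).2
                (mul_le_mul_of_nonneg_left (hpc.trans hεle) hL0.le)
        _ = L*(1/(1-t))*ε^γ := by ring
        _ ≤ (K+L)*(1/(1-t))*ε^γ :=
              mul_le_mul_of_nonneg_right
                (mul_le_mul_of_nonneg_right (by linarith) (by positivity)) hεγ0.le
      have h6 : (ρ/t)^(M:ℕ) ≤ ε^γ := by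
        rw [hγeq]; exact exp6 hρ hz htr hr hε hε1
      have hT4 : L*(ρ/t)^M/(t-ρ) ≤ (K+L)*(1/(t-ρ))*ε^γ := by
        calc L*(ρ/t)^M/(t-ρ) ≤ L*ε^γ/(t-ρ) :=
              (div_le_div_iff_of_pos_right htρ).2 (mul_le_mul_of_nonneg_left h6 hL0.le)
        _ = L*(1/(t-ρ))*ε^γ := by ring
        _ ≤ (K+L)*(1/(t-ρ))*ε^γ :=
              mul_le_mul_of_nonneg_right
                (mul_le_mul_of_nonneg_right (by linarith) (by positivity)) hεγ0.le
      have hinner : r/d + (r/t)/d + 1/(1-t) + 1/(t-ρ)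
          ≤ 2/(1-t) + 2/(t-ρ) + (t + 1 + r/t)/d + 2 := by
        have i1 : r/d ≤ 1/d := (div_le_div_iff_of_pos_right hd0).2 hr.le
        have i2 : (t+1+r/t)/d = t/d + 1/d + (r/t)/d := by ring
        have i3 : 0 ≤ t/d := by positivity
        have i4 : 1/(1-t) ≤ 2/(1-t) := (div_le_div_iff_of_pos_right h1t).2 one_le_two
        have i5 : 1/(t-ρ) ≤ 2/(t-ρ) := (div_le_div_iff_of_pos_right htρ).2 one_le_two
        linarith
      calc ‖f z‖ ≤ 2*π*‖f z‖ := hfz21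
      _ ≤ (K*ε) * (∑ n ∈ Finset.range N, (t/r)^n)
          + (K*ε/t) * (∑ m ∈ Finset.range M, (r/t)^m)
          + L*t^N/(1-t) + L*(ρ/t)^M/(t-ρ) := hm
      _ ≤ (K+L)*(r/d)*ε^γ + (K+L)*((r/t)/d)*ε^γ + (K+L)*(1/(1-t))*ε^γ
          + (K+L)*(1/(t-ρ))*ε^γ :=
          add_le_add (add_le_add (add_le_add hT1 hT2) hT3) hT4
      _ = (K+L) * (r/d + (r/t)/d + 1/(1-t) + 1/(t-ρ)) * ε^γ := by ring
      _ ≤ C * ε^γ := by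
          rw [hCdef]
          exact mul_le_mul_of_nonneg_right
            (mul_le_mul_of_nonneg_left hinner hKL.le) hεγ0.le
    · -- case r < t
      have hγeq : γ = Real.log t / Real.log r := by
        rw [hγdef, gammaAnn, ← ht, if_pos hrt]
      have hdeq : d = t - r := by
        rw [hd, abs_of_pos (by linarith : (0:ℝ) < t - r)]
      have htr0 : 0 < t - r := by linarith
      set N := ⌈Real.log ε / Real.log r⌉₊ with hNdef
      set M := ⌈Real.log ε / Real.log (ρ/t)⌉₊ with hMdef
      have hm := hM N M
      have hx : 1 < t/r := (one_lt_div hr0).2 hrt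
      have hxpos : 0 < (t/r) - 1 := by linarith
      have hS1 : (∑ n ∈ Finset.range N, (t/r)^n) ≤ (t/r)^N/((t/r)-1) := geom_gt hx N
      have h1e : ε * (t/r)^(N:ℕ) ≤ (t/r) * ε^γ := by
        rw [hγeq]; exact exp1 hr0 hrt hz1 hε hε1
      have hT1 : (K*ε) * (∑ n ∈ Finset.range N, (t/r)^n) ≤ (K+L) * (t/d) * ε^γ := by
        calc (K*ε) * (∑ n ∈ Finset.range N, (t/r)^n) ≤ (K*ε) * ((t/r)^N/((t/r)-1)) :=
              mul_le_mul_of_nonneg_left hS1 (by positivity)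
        _ = K * (ε*(t/r)^N) * (1/((t/r)-1)) := by ring
        _ ≤ K * ((t/r)*ε^γ) * (1/((t/r)-1)) :=
              mul_le_mul_of_nonneg_right
                (mul_le_mul_of_nonneg_left h1e (by positivity)) (by positivity)
        _ = K * (t/(t-r)) * ε^γ := by
            rw [show (t/r)-1 = (t-r)/r by field_simp, one_div_div]
            field_simp
        _ ≤ (K+L) * (t/d) * ε^γ := by
            rw [hdeq]
            exact mul_le_mul_of_nonneg_right
              (mul_le_mul_of_nonneg_right (by linarith) (by positivity)) hεγ0.le
      have hS2 : (∑ m ∈ Finset.range M, (r/t)^m) ≤ t/(t-r) := by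
        refine (geom_lt' (by positivity) ((div_lt_one ht0).2 hrt) M).trans_eq ?_
        rw [show 1 - r/t = (t-r)/t by field_simp, one_div_div]
      have hT2 : (K*ε/t) * (∑ m ∈ Finset.range M, (r/t)^m) ≤ (K+L) * (1/d) * ε^γ := by
        calc (K*ε/t) * (∑ m ∈ Finset.range M, (r/t)^m) ≤ (K*ε/t) * (t/(t-r)) :=
              mul_le_mul_of_nonneg_left hS2 (by positivity)
        _ = K * (1/(t-r)) * ε := by field_simp
        _ ≤ K * (1/(t-r)) * ε^γ := mul_le_mul_of_nonneg_left hεle (by positivity)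
        _ ≤ (K+L) * (1/d) * ε^γ := by
            rw [hdeq]
            exact mul_le_mul_of_nonneg_right
              (mul_le_mul_of_nonneg_right (by linarith) (by positivity)) hεγ0.le
      have hpc : t^(N:ℕ) ≤ ε^γ := by
        rw [hγeq]; exact exp2 ht0 hz1 hr0 hr hε hε1
      have hT3 : L*t^N/(1-t) ≤ (K+L)*(1/(1-t))*ε^γ := by
        calc L*t^N/(1-t) ≤ L*ε^γ/(1-t) :=
              (div_le_div_iff_of_pos_right h1t).2 (mul_le_mul_of_nonneg_left hpc hL0.le)
        _ = L*(1/(1-t))*ε^γ := by ring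
        _ ≤ (K+L)*(1/(1-t))*ε^γ :=
              mul_le_mul_of_nonneg_right
                (mul_le_mul_of_nonneg_right (by linarith) (by positivity)) hεγ0.le
      have h6 : (ρ/t)^(M:ℕ) ≤ ε :=
        pow_ceil_le (by positivity) ((div_lt_one ht0).2 hz) hε hε1
      have hT4 : L*(ρ/t)^M/(t-ρ) ≤ (K+L)*(1/(t-ρ))*ε^γ := by
        calc L*(ρ/t)^M/(t-ρ) ≤ L*ε^γ/(t-ρ) :=
              (div_le_div_iff_of_pos_right htρ).2
                (mul_le_mul_of_nonneg_left (h6.trans hεle) hL0.le)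
        _ = L*(1/(t-ρ))*ε^γ := by ring
        _ ≤ (K+L)*(1/(t-ρ))*ε^γ :=
              mul_le_mul_of_nonneg_right
                (mul_le_mul_of_nonneg_right (by linarith) (by positivity)) hεγ0.le
      have hinner : t/d + 1/d + 1/(1-t) + 1/(t-ρ)
          ≤ 2/(1-t) + 2/(t-ρ) + (t + 1 + r/t)/d + 2 := by
        have i2 : (t+1+r/t)/d = t/d + 1/d + (r/t)/d := by ring
        have i3 : 0 ≤ (r/t)/d := by positivity
        have i4 : 1/(1-t) ≤ 2/(1-t) := (div_le_div_iff_of_pos_right h1t).2 one_le_two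
        have i5 : 1/(t-ρ) ≤ 2/(t-ρ) := (div_le_div_iff_of_pos_right htρ).2 one_le_two
        linarith
      calc ‖f z‖ ≤ 2*π*‖f z‖ := hfz21
      _ ≤ (K*ε) * (∑ n ∈ Finset.range N, (t/r)^n)
          + (K*ε/t) * (∑ m ∈ Finset.range M, (r/t)^m)
          + L*t^N/(1-t) + L*(ρ/t)^M/(t-ρ) := hm
      _ ≤ (K+L)*(t/d)*ε^γ + (K+L)*(1/d)*ε^γ + (K+L)*(1/(1-t))*ε^γ
          + (K+L)*(1/(t-ρ))*ε^γ :=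
          add_le_add (add_le_add (add_le_add hT1 hT2) hT3) hT4
      _ = (K+L) * (t/d + 1/d + 1/(1-t) + 1/(t-ρ)) * ε^γ := by ring
      _ ≤ C * ε^γ := by
          rw [hCdef]
          exact mul_le_mul_of_nonneg_right
            (mul_le_mul_of_nonneg_left hinner hKL.le) hεγ0.le
end annulus
end

section
/- Let 0 < ρ < 1, r = √ρ, and let p(ζ, τ) = 1/(1-ζτ̄) + ρ²/(ζτ̄ - ρ²) be the reproducing kernel of the Hardy space of the annulus A_ρ. Then p(ζ, ρ/τ) = p(ρ/ζ, τ) for all ζ ∈ A_ρ and all τ with |τ| = r. Consequently, the integral operator Kf(ζ) = ∫_{Γ_r} p(ζ,τ) f(τ)|dτ| commutes with the reflection projection P_L f(ζ) = (f(ζ) + f(ρ/ζ))/2. -/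
lemma ne_aux (ρ : ℝ) (hρ : 0 < ρ) (hρ1 : ρ < 1) (z w : ℂ)
    (hz1 : ρ < ‖z‖) (hz2 : ‖z‖ < 1)
    (hw : ‖w‖ = Real.sqrt ρ) :
    (1 : ℂ) - z * w ≠ 0 ∧ z * w - (ρ : ℂ) ^ 2 ≠ 0 := by
  have hs0 : 0 < Real.sqrt ρ := Real.sqrt_pos.mpr hρ
  have hs1 : Real.sqrt ρ < 1 := by rw [← Real.sqrt_one]; exact Real.sqrt_lt_sqrt hρ.le hρ1 -- check name
  have hss : Real.sqrt ρ * Real.sqrt ρ = ρ := Real.mul_self_sqrt hρ.le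
  have habs : ‖z * w‖ = ‖z‖ * Real.sqrt ρ := by
    rw [norm_mul, hw]
  constructor
  · rw [sub_ne_zero]
    intro h
    have : ‖z * w‖ = 1 := by rw [← h]; simp
    nlinarith
  · rw [sub_ne_zero]
    intro h
    have : ‖z * w‖ = ρ ^ 2 := by
      rw [h]; simp [abs_of_pos hρ, norm_pow]
    nlinarith [sq_nonneg (Real.sqrt ρ - ρ)]

lemma key (ρ : ℝ) (hρ : 0 < ρ) (hρ1 : ρ < 1) (ζ τ : ℂ)
    (h1 : ρ < ‖ζ‖) (h2 : ‖ζ‖ < 1)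
    (hτ : ‖τ‖ = Real.sqrt ρ) :
    pAnn ρ ζ ((ρ : ℂ) / τ) = pAnn ρ ((ρ : ℂ) / ζ) τ := by
  have hρ0 : (ρ : ℂ) ≠ 0 := by exact_mod_cast hρ.ne'
  have hτ0 : τ ≠ 0 := by
    intro h
    rw [h, norm_zero] at hτ
    have := Real.sqrt_pos.mpr hρ
    linarith
  have hζ0 : ζ ≠ 0 := by
    intro h; rw [h, norm_zero] at h1; linarith
  have hconjτ : (starRingEnd ℂ) τ = (ρ : ℂ) / τ := by
    have : τ * (starRingEnd ℂ) τ = (ρ : ℂ) := by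
      rw [Complex.mul_conj]
      norm_cast
      rw [Complex.normSq_eq_norm_sq, hτ, Real.sq_sqrt hρ.le]
    field_simp at this ⊢
    linear_combination this
  have hconj2 : (starRingEnd ℂ) ((ρ : ℂ) / τ) = τ := by
    rw [map_div₀, hconjτ, Complex.conj_ofReal]
    field_simp
  obtain ⟨hne1, hne2⟩ := ne_aux ρ hρ hρ1 ζ τ h1 h2 hτ
  have hζτ : ζ * τ ≠ 0 := mul_ne_zero hζ0 hτ0
  have hNE : (ρ:ℂ)^2 * (1 - ζ * τ) ≠ 0 := mul_ne_zero (pow_ne_zero _ hρ0) hne1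
  have hD1 : 1 - (ρ:ℂ)/ζ * ((ρ:ℂ)/τ) = (ζ*τ - (ρ:ℂ)^2)/(ζ*τ) := by
    field_simp
  have hD2 : (ρ:ℂ)/ζ * ((ρ:ℂ)/τ) - (ρ:ℂ)^2 = ((ρ:ℂ)^2*(1 - ζ*τ))/(ζ*τ) := by
    field_simp
  unfold pAnn
  rw [hconj2, hconjτ, hD1, hD2, one_div_div, div_div_eq_mul_div,
    div_add_div _ _ hne1 hne2, div_add_div _ _ hne2 hNE,
    div_eq_div_iff (mul_ne_zero hne1 hne2) (mul_ne_zero hne2 hNE)]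
  ring

lemma abs_c (ρ : ℝ) (hρ : 0 ≤ ρ) (t : ℝ) :
    ‖(Real.sqrt ρ : ℂ) * Complex.exp (Complex.I * t)‖ = Real.sqrt ρ := by
  rw [norm_mul, Complex.norm_exp]
  simp [Real.sqrt_nonneg]

lemma c_ne (ρ : ℝ) (hρ : 0 < ρ) (t : ℝ) :
    (Real.sqrt ρ : ℂ) * Complex.exp (Complex.I * t) ≠ 0 := by
  apply mul_ne_zero _ (Complex.exp_ne_zero _)
  simpa using (Real.sqrt_pos.mpr hρ).ne'

lemma sq_c (ρ : ℝ) (hρ : 0 ≤ ρ) : ((Real.sqrt ρ : ℂ))^2 = (ρ : ℂ) := by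
  norm_cast
  exact Real.sq_sqrt hρ

lemma flip_c (ρ : ℝ) (hρ : 0 < ρ) (t : ℝ) :
    (Real.sqrt ρ : ℂ) * Complex.exp (Complex.I * ((2 * Real.pi - t : ℝ) : ℂ))
      = (ρ : ℂ) / ((Real.sqrt ρ : ℂ) * Complex.exp (Complex.I * t)) := by
  rw [eq_div_iff (c_ne ρ hρ t)]
  have h : Complex.I * ((2 * Real.pi - t : ℝ) : ℂ) + Complex.I * t
      = 2 * (Real.pi : ℂ) * Complex.I := by push_cast; ring
  calc (Real.sqrt ρ : ℂ) * Complex.exp (Complex.I * ((2 * Real.pi - t : ℝ) : ℂ)) *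
        ((Real.sqrt ρ : ℂ) * Complex.exp (Complex.I * t))
      = ((Real.sqrt ρ : ℂ))^2 *
        Complex.exp (Complex.I * ((2 * Real.pi - t : ℝ) : ℂ) + Complex.I * t) := by
        rw [Complex.exp_add]; ring
    _ = (ρ : ℂ) := by rw [h, Complex.exp_two_pi_mul_I, sq_c ρ hρ.le, mul_one]

lemma contP (ρ : ℝ) (hρ : 0 < ρ) (hρ1 : ρ < 1) (z : ℂ)
    (hz1 : ρ < ‖z‖) (hz2 : ‖z‖ < 1) :
    Continuous (fun t : ℝ => pAnn ρ z ((Real.sqrt ρ : ℂ) * Complex.exp (Complex.I * t))) := by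
  have hc : Continuous (fun t : ℝ =>
      (starRingEnd ℂ) ((Real.sqrt ρ : ℂ) * Complex.exp (Complex.I * t))) :=
    Complex.continuous_conj.comp (by fun_prop)
  have habs : ∀ t : ℝ, ‖
      (starRingEnd ℂ) ((Real.sqrt ρ : ℂ) * Complex.exp (Complex.I * t))‖ = Real.sqrt ρ := by
    intro t
    rw [Complex.norm_conj]
    exact abs_c ρ hρ.le t
  unfold pAnn
  apply Continuous.add
  · apply Continuous.div continuous_const (by continuity)
    intro t
    exact (ne_aux ρ hρ hρ1 z _ hz1 hz2 (habs t)).1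
  · apply Continuous.div continuous_const (by continuity)
    intro t
    exact (ne_aux ρ hρ hρ1 z _ hz1 hz2 (habs t)).2


/-- with `r = √ρ`, the kernel satisfies `p(ζ, ρ/τ) = p(ρ/ζ, τ)` for
`ζ ∈ A_ρ` and `|τ| = r`; consequently the integral operator
`Kf(ζ) = ∫_{Γ_r} p(ζ,τ) f(τ) |dτ|` commutes with the reflection projection
`P_L f(ζ) = (f(ζ) + f(ρ/ζ))/2`, i.e. `K(P_L f) = P_L(K f)` on `A_ρ`. -/
theorem stmt17 (ρ : ℝ) (hρ : 0 < ρ) (hρ1 : ρ < 1) :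
    (∀ ζ τ : ℂ, ρ < ‖ζ‖ → ‖ζ‖ < 1 →
      ‖τ‖ = Real.sqrt ρ →
      pAnn ρ ζ ((ρ : ℂ) / τ) = pAnn ρ ((ρ : ℂ) / ζ) τ) ∧
    ∀ f : ℂ → ℂ, ContinuousOn f (Metric.sphere (0 : ℂ) (Real.sqrt ρ)) →
      ∀ ζ : ℂ, ρ < ‖ζ‖ → ‖ζ‖ < 1 →
      (∫ t in (0:ℝ)..(2 * Real.pi),
          pAnn ρ ζ ((Real.sqrt ρ : ℂ) * Complex.exp (Complex.I * (t : ℂ))) *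
            ((f ((Real.sqrt ρ : ℂ) * Complex.exp (Complex.I * (t : ℂ))) +
              f ((ρ : ℂ) / ((Real.sqrt ρ : ℂ) * Complex.exp (Complex.I * (t : ℂ))))) / 2) *
            (Real.sqrt ρ : ℂ))
        = ((∫ t in (0:ℝ)..(2 * Real.pi),
              pAnn ρ ζ ((Real.sqrt ρ : ℂ) * Complex.exp (Complex.I * (t : ℂ))) *
                f ((Real.sqrt ρ : ℂ) * Complex.exp (Complex.I * (t : ℂ))) *
                (Real.sqrt ρ : ℂ)) +
            (∫ t in (0:ℝ)..(2 * Real.pi),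
              pAnn ρ ((ρ : ℂ) / ζ) ((Real.sqrt ρ : ℂ) * Complex.exp (Complex.I * (t : ℂ))) *
                f ((Real.sqrt ρ : ℂ) * Complex.exp (Complex.I * (t : ℂ))) *
                (Real.sqrt ρ : ℂ))) / 2 := by
  refine ⟨fun ζ τ h1 h2 hτ => key ρ hρ hρ1 ζ τ h1 h2 hτ, ?_⟩
  intro f hf ζ h1 h2
  have hs0 : 0 < Real.sqrt ρ := Real.sqrt_pos.mpr hρ
  have hcont : Continuous (fun t : ℝ => (Real.sqrt ρ : ℂ) * Complex.exp (Complex.I * t)) := by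
    continuity
  have hmem : ∀ t : ℝ, (Real.sqrt ρ : ℂ) * Complex.exp (Complex.I * t) ∈
      Metric.sphere (0 : ℂ) (Real.sqrt ρ) := by
    intro t
    simp only [mem_sphere_zero_iff_norm]
    exact abs_c ρ hρ.le t
  have hmem2 : ∀ t : ℝ, (ρ : ℂ) / ((Real.sqrt ρ : ℂ) * Complex.exp (Complex.I * t)) ∈
      Metric.sphere (0 : ℂ) (Real.sqrt ρ) := by
    intro t
    rw [← flip_c ρ hρ t]
    exact hmem _
  have hfc : Continuous (fun t : ℝ =>
      f ((Real.sqrt ρ : ℂ) * Complex.exp (Complex.I * t))) :=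
    hf.comp_continuous hcont hmem
  have hfc2 : Continuous (fun t : ℝ =>
      f ((ρ : ℂ) / ((Real.sqrt ρ : ℂ) * Complex.exp (Complex.I * t)))) := by
    apply hf.comp_continuous _ hmem2
    exact Continuous.div continuous_const hcont (fun t => c_ne ρ hρ t)
  -- annulus membership of ρ/ζ
  have hζ0 : ζ ≠ 0 := by intro h; rw [h, norm_zero] at h1; linarith
  have habsinv : ‖(ρ : ℂ) / ζ‖ = ρ / ‖ζ‖ := by
    rw [norm_div, Complex.norm_real, Real.norm_eq_abs, abs_of_pos hρ]
  have h1' : ρ < ‖(ρ : ℂ) / ζ‖ := by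
    rw [habsinv]
    rw [lt_div_iff₀ (hρ.trans h1)]
    nlinarith
  have h2' : ‖(ρ : ℂ) / ζ‖ < 1 := by
    rw [habsinv]
    rw [div_lt_one (hρ.trans h1)]
    exact h1
  have hint1 : IntervalIntegrable (fun t : ℝ =>
      pAnn ρ ζ ((Real.sqrt ρ : ℂ) * Complex.exp (Complex.I * t)) *
        f ((Real.sqrt ρ : ℂ) * Complex.exp (Complex.I * t)) * (Real.sqrt ρ : ℂ))
      MeasureTheory.volume 0 (2 * Real.pi) :=
    (((contP ρ hρ hρ1 ζ h1 h2).mul hfc).mul continuous_const).intervalIntegrable _ _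
  have hint2 : IntervalIntegrable (fun t : ℝ =>
      pAnn ρ ζ ((Real.sqrt ρ : ℂ) * Complex.exp (Complex.I * t)) *
        f ((ρ : ℂ) / ((Real.sqrt ρ : ℂ) * Complex.exp (Complex.I * t))) * (Real.sqrt ρ : ℂ))
      MeasureTheory.volume 0 (2 * Real.pi) :=
    (((contP ρ hρ hρ1 ζ h1 h2).mul hfc2).mul continuous_const).intervalIntegrable _ _
  have step1 : (∫ t in (0:ℝ)..(2 * Real.pi),
      pAnn ρ ζ ((Real.sqrt ρ : ℂ) * Complex.exp (Complex.I * (t : ℂ))) *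
        ((f ((Real.sqrt ρ : ℂ) * Complex.exp (Complex.I * (t : ℂ))) +
          f ((ρ : ℂ) / ((Real.sqrt ρ : ℂ) * Complex.exp (Complex.I * (t : ℂ))))) / 2) *
        (Real.sqrt ρ : ℂ))
      = ((∫ t in (0:ℝ)..(2 * Real.pi),
          pAnn ρ ζ ((Real.sqrt ρ : ℂ) * Complex.exp (Complex.I * t)) *
            f ((Real.sqrt ρ : ℂ) * Complex.exp (Complex.I * t)) * (Real.sqrt ρ : ℂ)) +
        (∫ t in (0:ℝ)..(2 * Real.pi),
          pAnn ρ ζ ((Real.sqrt ρ : ℂ) * Complex.exp (Complex.I * t)) *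
            f ((ρ : ℂ) / ((Real.sqrt ρ : ℂ) * Complex.exp (Complex.I * t))) *
            (Real.sqrt ρ : ℂ))) / 2 := by
    rw [← intervalIntegral.integral_add hint1 hint2, ← intervalIntegral.integral_div]
    apply intervalIntegral.integral_congr
    intro t _
    simp only
    ring
  have hpt : ∀ t : ℝ,
      pAnn ρ ζ ((Real.sqrt ρ : ℂ) * Complex.exp (Complex.I * t)) *
        f ((ρ : ℂ) / ((Real.sqrt ρ : ℂ) * Complex.exp (Complex.I * t))) * (Real.sqrt ρ : ℂ)
      = (fun u : ℝ => pAnn ρ ((ρ : ℂ) / ζ) ((Real.sqrt ρ : ℂ) * Complex.exp (Complex.I * u)) *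
          f ((Real.sqrt ρ : ℂ) * Complex.exp (Complex.I * u)) * (Real.sqrt ρ : ℂ))
        (2 * Real.pi - t) := by
    intro t
    simp only
    rw [flip_c ρ hρ t]
    congr 2
    -- pAnn ρ ζ (c t) = pAnn ρ (ρ/ζ) (ρ / c t)
    have habsτ : ‖(ρ : ℂ) / ((Real.sqrt ρ : ℂ) * Complex.exp (Complex.I * t))‖
        = Real.sqrt ρ := by
      rw [norm_div, abs_c ρ hρ.le, Complex.norm_real, Real.norm_eq_abs, abs_of_pos hρ]
      rw [div_eq_iff hs0.ne']
      exact (Real.mul_self_sqrt hρ.le).symm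
    have hback : (ρ : ℂ) / ((ρ : ℂ) / ((Real.sqrt ρ : ℂ) * Complex.exp (Complex.I * t)))
        = (Real.sqrt ρ : ℂ) * Complex.exp (Complex.I * t) := by
      rw [div_div_eq_mul_div, mul_comm, mul_div_assoc, div_self (by exact_mod_cast hρ.ne'),
        mul_one]
    have := key ρ hρ hρ1 ζ ((ρ : ℂ) / ((Real.sqrt ρ : ℂ) * Complex.exp (Complex.I * t)))
      h1 h2 habsτ
    rw [hback] at this
    exact this
  have step2 : (∫ t in (0:ℝ)..(2 * Real.pi),
      pAnn ρ ζ ((Real.sqrt ρ : ℂ) * Complex.exp (Complex.I * t)) *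
        f ((ρ : ℂ) / ((Real.sqrt ρ : ℂ) * Complex.exp (Complex.I * t))) * (Real.sqrt ρ : ℂ))
      = ∫ t in (0:ℝ)..(2 * Real.pi),
          pAnn ρ ((ρ : ℂ) / ζ) ((Real.sqrt ρ : ℂ) * Complex.exp (Complex.I * t)) *
            f ((Real.sqrt ρ : ℂ) * Complex.exp (Complex.I * t)) * (Real.sqrt ρ : ℂ) := by
    rw [intervalIntegral.integral_congr (g := fun t : ℝ =>
      (fun u : ℝ => pAnn ρ ((ρ : ℂ) / ζ) ((Real.sqrt ρ : ℂ) * Complex.exp (Complex.I * u)) *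
          f ((Real.sqrt ρ : ℂ) * Complex.exp (Complex.I * u)) * (Real.sqrt ρ : ℂ))
        (2 * Real.pi - t)) (fun t _ => hpt t)]
    rw [intervalIntegral.integral_comp_sub_left (fun u : ℝ =>
      pAnn ρ ((ρ : ℂ) / ζ) ((Real.sqrt ρ : ℂ) * Complex.exp (Complex.I * u)) *
        f ((Real.sqrt ρ : ℂ) * Complex.exp (Complex.I * u)) * (Real.sqrt ρ : ℂ)) (2 * Real.pi)]
    norm_num
  rw [step1, step2]
end
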